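/- arXiv:2601.02217 — 6 statements merged into one kernel-verified Lean document; each statement's English description precedes it below -/
import Mathlib

section
/- Let ζ ∈ 𝕋 and let g be analytic on the open unit disk 𝔻 with square-summable Taylor coefficients (ĝ(n))ₙ (i.e. g ∈ H²). Define f(z) = a + (z − ζ)g(z) on 𝔻 for some a ∈ ℂ. Then the Taylor series of f converges at ζ and ∑_{j=0}^∞ f̂(j) ζ^j = a; in particular a equals the radial limit lim_{r→1⁻} f(rζ). -/
open Complex Filter Metric Topology
open scoped NNReal ENNReal

private lemma hasFPowerSeriesAt_of_hasSum (F : ℂ → ℂ) (c : ℕ → ℂ)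
    (h : ∀ z ∈ Metric.ball (0 : ℂ) 1, HasSum (fun n => c n * z ^ n) (F z)) :
    HasFPowerSeriesAt F (FormalMultilinearSeries.ofScalars ℂ c) 0 := by
  refine ⟨((1/2 : ℝ≥0) : ℝ≥0∞), ?_, ENNReal.coe_pos.mpr (by norm_num), ?_⟩
  · -- radius bound
    have hhalf : (1/2 : ℂ) ∈ Metric.ball (0 : ℂ) 1 := by
      rw [Metric.mem_ball, dist_zero_right]
      norm_num
    have hsum := (h _ hhalf).summable
    have htend : Tendsto (fun n => ‖c n * (1/2 : ℂ) ^ n‖) atTop (𝓝 0) :=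
      tendsto_zero_iff_norm_tendsto_zero.mp hsum.tendsto_atTop_zero
    refine FormalMultilinearSeries.le_radius_of_tendsto _ (l := 0) ?_
    refine htend.congr fun n => ?_
    rw [norm_mul, norm_pow, FormalMultilinearSeries.ofScalars_norm]
    norm_num
  · intro y hy
    have h1 : (‖y‖₊ : ℝ≥0∞) < ((1/2 : ℝ≥0) : ℝ≥0∞) := by
      rwa [mem_emetric_ball_zero_iff] at hy
    have hy' : y ∈ Metric.ball (0 : ℂ) 1 := by
      rw [mem_ball_zero_iff]
      have h2 : ‖y‖₊ < (1/2 : ℝ≥0) := by exact_mod_cast h1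
      have h3 : ‖y‖₊ < 1 := h2.trans (by exact_mod_cast (one_half_lt_one : (1/2:ℝ) < 1))
      exact_mod_cast h3
    have heq : (fun n => (FormalMultilinearSeries.ofScalars ℂ c n) fun _ => y)
        = fun n => c n * y ^ n := by
      funext n
      rw [FormalMultilinearSeries.ofScalars_apply_eq, smul_eq_mul]
    rw [zero_add, heq]
    exact h y hy'

/-- Let `ζ ∈ 𝕋` and let `g` be analytic on `𝔻` with square-summable
Taylor coefficients `gh` (i.e. `g ∈ H²`).  Let `f(z) = a + (z - ζ) g(z)` on `𝔻`, with
Taylor coefficients `fh`.  Then the Taylor series of `f` converges at `ζ` with sum `a`,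
and `a` is the radial limit of `f` at `ζ`. -/
theorem taylor_series_converges_at_boundary_point
    (ζ : ℂ) (hζ : ‖ζ‖ = 1)
    (g : ℂ → ℂ) (gh : ℕ → ℂ)
    (hg : ∀ z ∈ Metric.ball (0 : ℂ) 1, HasSum (fun n => gh n * z ^ n) (g z))
    (hg2 : Summable (fun n => ‖gh n‖ ^ 2))
    (a : ℂ) (f : ℂ → ℂ)
    (hf : ∀ z ∈ Metric.ball (0 : ℂ) 1, f z = a + (z - ζ) * g z)
    (fh : ℕ → ℂ)
    (hfh : ∀ z ∈ Metric.ball (0 : ℂ) 1, HasSum (fun n => fh n * z ^ n) (f z)) :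
    Tendsto (fun N => ∑ j ∈ Finset.range N, fh j * ζ ^ j) atTop (𝓝 a) ∧
      Tendsto (fun r : ℝ => f ((r : ℂ) * ζ)) (𝓝[<] (1 : ℝ)) (𝓝 a) := by
  -- the explicit coefficient sequence
  set c : ℕ → ℂ := fun n => Nat.rec (a - ζ * gh 0) (fun k _ => gh k - ζ * gh (k+1)) n with hc
  have hc0 : c 0 = a - ζ * gh 0 := rfl
  have hcs : ∀ k, c (k + 1) = gh k - ζ * gh (k + 1) := fun k => rfl
  have hghten : Tendsto gh atTop (𝓝 0) := by
    have h1 : Tendsto (fun n => ‖gh n‖ ^ 2) atTop (𝓝 0) := hg2.tendsto_atTop_zero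
    have h2 := (Real.continuous_sqrt.tendsto 0).comp h1
    rw [Real.sqrt_zero] at h2
    have h3 : Tendsto (fun n => ‖gh n‖) atTop (𝓝 0) :=
      h2.congr fun n => Real.sqrt_sq (norm_nonneg _)
    exact tendsto_zero_iff_norm_tendsto_zero.mpr h3
  -- c sums to f on the ball
  have hcsum : ∀ z ∈ Metric.ball (0 : ℂ) 1, HasSum (fun n => c n * z ^ n) (f z) := by
    intro z hz
    have hgz := hg z hz
    have h1 : HasSum (fun n => ζ * (gh n * z ^ n)) (ζ * g z) := hgz.mul_left ζ
    set F : ℕ → ℂ := fun n => Nat.rec a (fun k _ => gh k * z ^ (k+1)) n with hFdef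
    have hF0 : F 0 = a := rfl
    have hFs : ∀ k, F (k + 1) = gh k * z ^ (k + 1) := fun k => rfl
    have h2 : HasSum (fun n => F (n + 1)) (z * g z) := by
      have hz2 : HasSum (fun n => z * (gh n * z ^ n)) (z * g z) := hgz.mul_left z
      have heqF : (fun n => F (n + 1)) = fun n => z * (gh n * z ^ n) := by
        funext n; rw [hFs n]; ring
      rw [heqF]; exact hz2
    have hFsum : HasSum F (z * g z + a) := by
      refine (hasSum_nat_add_iff' 1).mp ?_
      have : z * g z + a - ∑ i ∈ Finset.range 1, F i = z * g z := by
        rw [Finset.sum_range_one, hF0]; ring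
      rw [this]
      exact h2
    have h3 : HasSum (fun n => F n - ζ * (gh n * z ^ n)) ((z * g z + a) - ζ * g z) :=
      hFsum.sub h1
    have heq : (fun n => F n - ζ * (gh n * z ^ n)) = fun n => c n * z ^ n := by
      funext n
      cases n with
      | zero => rw [hF0, hc0]; simp
      | succ k => rw [hFs k, hcs k]; ring
    rw [heq] at h3
    have : f z = (z * g z + a) - ζ * g z := by rw [hf z hz]; ring
    rwa [← this] at h3
  -- uniqueness of power series coefficients
  have hfc : fh = c := by
    have p1 := hasFPowerSeriesAt_of_hasSum f fh hfh
    have p2 := hasFPowerSeriesAt_of_hasSum f c hcsum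
    have := p1.eq_formalMultilinearSeries p2
    exact (FormalMultilinearSeries.ofScalars_series_eq_iff ℂ _ _).mp this
  constructor
  · -- partial sums tend to a
    have hps : ∀ N, ∑ j ∈ Finset.range (N + 1), c j * ζ ^ j = a - gh N * ζ ^ (N + 1) := by
      intro N
      induction N with
      | zero => rw [Finset.sum_range_one, hc0]; simp [pow_one]; ring
      | succ k ih =>
          rw [Finset.sum_range_succ, ih, hcs k]
          ring
    rw [hfc]
    rw [← tendsto_add_atTop_iff_nat 1]
    have htail : Tendsto (fun N => a - gh N * ζ ^ (N + 1)) atTop (𝓝 a) := by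
      have h0 : Tendsto (fun N => gh N * ζ ^ (N + 1)) atTop (𝓝 0) := by
        rw [tendsto_zero_iff_norm_tendsto_zero]
        have heq2 : (fun N => ‖gh N * ζ ^ (N + 1)‖) = fun N => ‖gh N‖ := by
          funext N
          rw [norm_mul, norm_pow]
          simp [hζ]
        rw [heq2]
        exact tendsto_zero_iff_norm_tendsto_zero.mp hghten
      simpa using (tendsto_const_nhds (x := a)).sub h0
    exact htail.congr fun N => (hps N).symm
  · -- radial limit
    set C : ℝ := ∑' n, ‖gh n‖ ^ 2 with hC
    have hC0 : 0 ≤ C := tsum_nonneg fun n => sq_nonneg _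
    -- key bound
    have key : ∀ r : ℝ, 0 ≤ r → r < 1 →
        (1 - r) * ‖g ((r : ℂ) * ζ)‖ ≤ Real.sqrt (1 - r) * (C + 1) / 2 := by
      intro r hr0 hr1
      set t : ℝ := Real.sqrt (1 - r) with ht
      have ht0 : 0 < t := Real.sqrt_pos.mpr (by linarith)
      have ht2 : t ^ 2 = 1 - r := Real.sq_sqrt (by linarith)
      have hz : (r : ℂ) * ζ ∈ Metric.ball (0 : ℂ) 1 := by
        rw [Metric.mem_ball, dist_zero_right, norm_mul]
        simp only [Complex.norm_real, Real.norm_eq_abs, hζ, mul_one]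
        rwa [_root_.abs_of_nonneg hr0]
      have hgz := hg _ hz
      have hnorm : ∀ n : ℕ, ‖gh n * ((r : ℂ) * ζ) ^ n‖ = ‖gh n‖ * r ^ n := by
        intro n
        rw [norm_mul, norm_pow, norm_mul]
        simp [hζ, Complex.norm_real, _root_.abs_of_nonneg hr0]
      have hr2 : r ^ 2 < 1 := by nlinarith
      have hr20 : 0 ≤ r ^ 2 := sq_nonneg r
      -- pointwise bound
      have hpt : ∀ n : ℕ, ‖gh n‖ * r ^ n ≤ ‖gh n‖ ^ 2 / (2 * t) + t * (r ^ 2) ^ n / 2 := by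
        intro n
        have hst : 0 < Real.sqrt t := Real.sqrt_pos.mpr ht0
        have hst2 : Real.sqrt t ^ 2 = t := Real.sq_sqrt ht0.le
        have h2ab := two_mul_le_add_sq (‖gh n‖ / Real.sqrt t) (Real.sqrt t * r ^ n)
        have hab : 2 * (‖gh n‖ / Real.sqrt t) * (Real.sqrt t * r ^ n)
            = 2 * (‖gh n‖ * r ^ n) := by
          field_simp
        rw [hab] at h2ab
        have e1 : (‖gh n‖ / Real.sqrt t) ^ 2 = ‖gh n‖ ^ 2 / t := by
          rw [div_pow, hst2]
        have e2 : (Real.sqrt t * r ^ n) ^ 2 = t * (r ^ 2) ^ n := by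
          rw [mul_pow, hst2, ← pow_mul, ← pow_mul, Nat.mul_comm]
        rw [e1, e2] at h2ab
        have e3 : ‖gh n‖ ^ 2 / t + t * (r ^ 2) ^ n
            = 2 * (‖gh n‖ ^ 2 / (2 * t) + t * (r ^ 2) ^ n / 2) := by
          field_simp
        linarith
      have hsum1 : Summable (fun n => ‖gh n‖ ^ 2 / (2 * t) + t * (r ^ 2) ^ n / 2) := by
        refine Summable.add (hg2.div_const _) ?_
        exact ((summable_geometric_of_lt_one hr20 hr2).mul_left t).div_const 2
      have hsumn : Summable (fun n => ‖gh n‖ * r ^ n) :=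
        Summable.of_nonneg_of_le (fun n => by positivity) hpt hsum1
      have hbound1 : ‖g ((r : ℂ) * ζ)‖ ≤ ∑' n, ‖gh n‖ * r ^ n := by
        rw [← hgz.tsum_eq]
        refine (norm_tsum_le_tsum_norm ?_).trans_eq (tsum_congr hnorm)
        exact hsumn.congr fun n => (hnorm n).symm
      have hbound2 : ∑' n, ‖gh n‖ * r ^ n ≤ C / (2 * t) + t * (1 - r ^ 2)⁻¹ / 2 := by
        refine (Summable.tsum_le_tsum hpt hsumn hsum1).trans_eq ?_
        rw [Summable.tsum_add (hg2.div_const _)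
          (((summable_geometric_of_lt_one hr20 hr2).mul_left t).div_const 2)]
        congr 1
        · rw [tsum_div_const]
        · rw [tsum_div_const, tsum_mul_left, tsum_geometric_of_lt_one hr20 hr2]
      have hfinal : (1 - r) * ‖g ((r : ℂ) * ζ)‖ ≤
          (1 - r) * (C / (2 * t) + t * (1 - r ^ 2)⁻¹ / 2) :=
        mul_le_mul_of_nonneg_left (hbound1.trans hbound2) (by linarith)
      refine hfinal.trans ?_
      have e3 : (1 - r) * (C / (2 * t)) = t * C / 2 := by
        rw [← ht2]; field_simp
      have e4 : (1 - r) * (t * (1 - r ^ 2)⁻¹ / 2) ≤ t / 2 := by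
        have h1r2 : 0 < 1 - r ^ 2 := by nlinarith
        have hle1 : (1 - r) * (1 - r ^ 2)⁻¹ ≤ 1 := by
          rw [mul_inv_le_iff₀ h1r2]; nlinarith
        have : (1 - r) * (t * (1 - r ^ 2)⁻¹ / 2) = t * ((1 - r) * (1 - r ^ 2)⁻¹) / 2 := by
          ring
        rw [this]
        calc t * ((1 - r) * (1 - r ^ 2)⁻¹) / 2 ≤ t * 1 / 2 := by
              apply div_le_div_of_nonneg_right ?_ (by norm_num) |>.trans_eq rfl
              exact mul_le_mul_of_nonneg_left hle1 ht0.le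
          _ = t / 2 := by ring
      have e5 : (1 - r) * (C / (2 * t) + t * (1 - r ^ 2)⁻¹ / 2)
          = (1 - r) * (C / (2 * t)) + (1 - r) * (t * (1 - r ^ 2)⁻¹ / 2) := by ring
      rw [e5, e3]
      have e6 : t * C / 2 + t / 2 = t * (C + 1) / 2 := by ring
      linarith
    -- conclude
    have hmem : Set.Ioo (0 : ℝ) 1 ∈ 𝓝[<] (1 : ℝ) :=
      Ioo_mem_nhdsLT_of_mem (by constructor <;> norm_num)
    have hdiff : Tendsto (fun r : ℝ => f ((r : ℂ) * ζ) - a) (𝓝[<] (1 : ℝ)) (𝓝 0) := by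
      apply squeeze_zero_norm' (a := fun r : ℝ => Real.sqrt (1 - r) * (C + 1) / 2)
      · filter_upwards [hmem] with r hr
        have hz : (r : ℂ) * ζ ∈ Metric.ball (0 : ℂ) 1 := by
          rw [Metric.mem_ball, dist_zero_right, norm_mul]
          simp only [Complex.norm_real, Real.norm_eq_abs, hζ, mul_one]
          rw [_root_.abs_of_nonneg hr.1.le]; exact hr.2
        have heqf : f ((r : ℂ) * ζ) - a = ζ * ((r : ℂ) - 1) * g ((r : ℂ) * ζ) := by
          rw [hf _ hz]; ring
        rw [heqf]
        have hnn : ‖ζ * ((r : ℂ) - 1) * g ((r : ℂ) * ζ)‖ = (1 - r) * ‖g ((r : ℂ) * ζ)‖ := by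
          rw [norm_mul, norm_mul]
          have h1 : ‖(r : ℂ) - 1‖ = 1 - r := by
            rw [show ((r : ℂ) - 1) = ((r - 1 : ℝ) : ℂ) by push_cast; ring]
            rw [Complex.norm_real, Real.norm_eq_abs, _root_.abs_of_nonpos (by linarith [hr.2])]
            ring
          simp [hζ, h1]
        rw [hnn]
        exact key r hr.1.le hr.2
      · have hcont : Tendsto (fun r : ℝ => Real.sqrt (1 - r) * (C + 1) / 2)
            (𝓝 (1 : ℝ)) (𝓝 (Real.sqrt (1 - 1) * (C + 1) / 2)) :=
          (((Real.continuous_sqrt.comp (continuous_const.sub continuous_id)).mul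
            continuous_const).div_const 2).continuousAt
        simpa using hcont.mono_left nhdsWithin_le_nhds
    have := hdiff.add (tendsto_const_nhds (x := a))
    simpa using this
end

section
/- Let ζ ∈ 𝕋, let g ∈ H², a ∈ ℂ, and set f(z) = a + (z − ζ)g(z) on 𝔻. Then for every j ≥ 0 the series ∑_{k=j+1}^∞ f̂(k) ζ^{k−j−1} converges and its sum equals ĝ(j). -/
open Complex Filter Metric Topology

lemma coeff_identity (ζ : ℂ)
    (g : ℂ → ℂ) (gh : ℕ → ℂ)
    (hg : ∀ z ∈ Metric.ball (0 : ℂ) 1, HasSum (fun n => gh n * z ^ n) (g z))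
    (a : ℂ) (f : ℂ → ℂ)
    (hf : ∀ z ∈ Metric.ball (0 : ℂ) 1, f z = a + (z - ζ) * g z)
    (fh : ℕ → ℂ)
    (hfh : ∀ z ∈ Metric.ball (0 : ℂ) 1, HasSum (fun n => fh n * z ^ n) (f z)) :
    ∀ n : ℕ, fh (n + 1) = gh n - ζ * gh (n + 1) := by
  set c : ℕ → ℂ := fun n => Nat.rec (a - ζ * gh 0) (fun m _ => gh m - ζ * gh (m + 1)) n with hc
  set p : FormalMultilinearSeries ℂ ℂ ℂ :=
    fun n => ContinuousMultilinearMap.mkPiRing ℂ (Fin n) (c n) with hp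
  set q : FormalMultilinearSeries ℂ ℂ ℂ :=
    fun n => ContinuousMultilinearMap.mkPiRing ℂ (Fin n) (fh n) with hq
  have hpc : ∀ n, p.coeff n = c n := by
    intro n
    simp [FormalMultilinearSeries.coeff, hp]
  have hqc : ∀ n, q.coeff n = fh n := by
    intro n
    simp [FormalMultilinearSeries.coeff, hq]
  have hball : Metric.ball (0 : ℂ) 1 ∈ 𝓝 (0 : ℂ) := Metric.ball_mem_nhds 0 one_pos
  have hfp : HasFPowerSeriesAt f p 0 := by
    rw [hasFPowerSeriesAt_iff]
    filter_upwards [hball] with z hz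
    have hgz := hg z hz
    have h1 : HasSum (fun n => gh n * z ^ (n + 1)) (z * g z) := by
      have := hgz.mul_left z
      convert this using 2 with n
      · rfl
      ring
    set A : ℕ → ℂ := fun n => Nat.rec 0 (fun m _ => gh m * z ^ (m + 1)) n with hA
    have h1' : HasSum A (z * g z) := by
      rw [← hasSum_nat_add_iff' 1]
      simpa [hA] using h1
    have h2 : HasSum (fun n => (if n = 0 then a else 0 : ℂ)) a := hasSum_ite_eq 0 a
    have h3 : HasSum (fun n => ζ * (gh n * z ^ n)) (ζ * g z) := hgz.mul_left ζ
    have htot := (h1'.add h2).sub h3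
    have : HasSum (fun n => z ^ n • p.coeff n) (z * g z + a - ζ * g z) := by
      convert htot using 2 with n
      · rfl
      rcases n with _ | m
      · simp [hpc, hc, hA]
      · simp [hpc, hc, hA]; ring
    convert this using 1
    · rfl
    rw [zero_add, hf z hz]; ring
  have hfq : HasFPowerSeriesAt f q 0 := by
    rw [hasFPowerSeriesAt_iff]
    filter_upwards [hball] with z hz
    have := hfh z hz
    rw [zero_add]
    convert this using 2 with n
    · rfl
    simp [hqc]; ring
  have hpq : q = p := hfq.eq_formalMultilinearSeries hfp
  intro n
  have := congrArg (fun r => FormalMultilinearSeries.coeff r (n + 1)) hpq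
  simp only [hpc, hqc] at this
  simpa [hc] using this

/-- Let `ζ ∈ 𝕋`, `g ∈ H²` with Taylor coefficients `gh`, `a ∈ ℂ`, and
`f(z) = a + (z - ζ) g(z)` on `𝔻`, with Taylor coefficients `fh`.  Then for every `j ≥ 0`
the series `∑_{k=j+1}^∞ fh(k) ζ^{k-j-1}` converges with sum `gh(j)`. -/
theorem coefficients_of_difference_quotient
    (ζ : ℂ) (hζ : ‖ζ‖ = 1)
    (g : ℂ → ℂ) (gh : ℕ → ℂ)
    (hg : ∀ z ∈ Metric.ball (0 : ℂ) 1, HasSum (fun n => gh n * z ^ n) (g z))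
    (hg2 : Summable (fun n => ‖gh n‖ ^ 2))
    (a : ℂ) (f : ℂ → ℂ)
    (hf : ∀ z ∈ Metric.ball (0 : ℂ) 1, f z = a + (z - ζ) * g z)
    (fh : ℕ → ℂ)
    (hfh : ∀ z ∈ Metric.ball (0 : ℂ) 1, HasSum (fun n => fh n * z ^ n) (f z)) :
    ∀ j : ℕ,
      Tendsto (fun N => ∑ i ∈ Finset.range N, fh (j + 1 + i) * ζ ^ i) atTop (𝓝 (gh j)) := by
  intro j
  have hco := coeff_identity ζ g gh hg a f hf fh hfh
  -- telescoping
  have hsum : ∀ N, ∑ i ∈ Finset.range N, fh (j + 1 + i) * ζ ^ i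
      = gh j - gh (j + N) * ζ ^ N := by
    intro N
    have : ∀ i, fh (j + 1 + i) * ζ ^ i
        = gh (j + i) * ζ ^ i - gh (j + (i + 1)) * ζ ^ (i + 1) := by
      intro i
      have h := hco (j + i)
      have h' : j + 1 + i = j + i + 1 := by ring
      rw [h', h]
      have h'' : j + (i + 1) = j + i + 1 := by ring
      rw [h'']
      ring
    calc ∑ i ∈ Finset.range N, fh (j + 1 + i) * ζ ^ i
        = ∑ i ∈ Finset.range N,
            ((fun i => gh (j + i) * ζ ^ i) i - (fun i => gh (j + i) * ζ ^ i) (i + 1)) := by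
          refine Finset.sum_congr rfl fun i _ => ?_
          simpa using this i
      _ = gh (j + 0) * ζ ^ 0 - gh (j + N) * ζ ^ N := Finset.sum_range_sub' _ N
      _ = gh j - gh (j + N) * ζ ^ N := by simp
  simp only [hsum]
  -- the tail tends to zero
  have hgh0 : Tendsto (fun n => ‖gh n‖) atTop (𝓝 0) := by
    have h2 := hg2.tendsto_atTop_zero
    have := h2.sqrt
    simpa [Real.sqrt_sq (norm_nonneg _)] using this
  have htail : Tendsto (fun N => gh (j + N) * ζ ^ N) atTop (𝓝 0) := by
    rw [tendsto_zero_iff_norm_tendsto_zero]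
    have : (fun N => ‖gh (j + N) * ζ ^ N‖) = fun N => ‖gh (j + N)‖ := by
      funext N
      rw [norm_mul, norm_pow]
      simp [hζ]
    rw [this]
    have := hgh0.comp (tendsto_add_atTop_nat j)
    simpa [Function.comp_def, Nat.add_comm] using this
  have h := (tendsto_const_nhds (x := gh j)).sub htail
  simpa using h
end

section
/- Fix s ≥ 1 and distinct points ζ₀, …, ζ_{s−1} ∈ 𝕋, set q(z) = ∏_{k=0}^{s−1}(z − ζ_k), p_k(z) = q(z)/((z − ζ_k) q'(ζ_k)) for 0 ≤ k ≤ s−1, and p_j(z) = q(z) z^{j−s} for j ≥ s. Then the family (p_j)_{j≥0} is orthonormal with respect to the inner product ⟨f₁, f₂⟩_{D_μ} := ∑_{k=0}^{s−1} f₁(ζ_k) conj(f₂(ζ_k)) + ∑_{n=0}^∞ (Qf₁)^(n) conj((Qf₂)^(n)); explicitly, ∑_{ℓ=0}^{s−1} p_i(ζ_ℓ) conj(p_j(ζ_ℓ)) + ∑_{n=0}^∞ (Qp_i)^(n) conj((Qp_j)^(n)) = δ_{ij} for all i, j ≥ 0. -/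
open Complex Polynomial Filter Metric Topology

noncomputable section

/-- Difference quotient on polynomials: `(p - p(c))/(X - c)`; for a polynomial the
radial limit at `c` is just the evaluation `p(c)`, and the division is exact. -/
def dqPoly (c : ℂ) (p : Polynomial ℂ) : Polynomial ℂ :=
  (p - Polynomial.C (p.eval c)) /ₘ (Polynomial.X - Polynomial.C c)

/-- `Q = Q_{ζ₀} Q_{ζ₁} ⋯ Q_{ζ_{s-1}}` acting on polynomials. -/
def Qiter (s : ℕ) (ζ : Fin s → ℂ) (p : Polynomial ℂ) : Polynomial ℂ :=
  (List.ofFn ζ).foldr dqPoly p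

/-- The orthonormal basis polynomials: `p_j = q/((z - ζ_j) q'(ζ_j))` for `j < s`
and `p_j = q(z) z^{j-s}` for `j ≥ s`, where `q(z) = ∏ (z - ζ_k)`. -/
def pbasis (s : ℕ) (ζ : Fin s → ℂ) (j : ℕ) : Polynomial ℂ :=
  if h : j < s then
    Polynomial.C (((Polynomial.derivative (∏ k, (Polynomial.X - Polynomial.C (ζ k)))).eval
        (ζ ⟨j, h⟩))⁻¹) *
      ((∏ k, (Polynomial.X - Polynomial.C (ζ k))) /ₘ (Polynomial.X - Polynomial.C (ζ ⟨j, h⟩)))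
  else (∏ k, (Polynomial.X - Polynomial.C (ζ k))) * Polynomial.X ^ (j - s)

private lemma dqPoly_C (c a : ℂ) : dqPoly c (Polynomial.C a) = 0 := by
  simp [dqPoly]

private lemma dqPoly_natDegree (c : ℂ) (p : Polynomial ℂ) :
    (dqPoly c p).natDegree ≤ p.natDegree - 1 := by
  rw [dqPoly, Polynomial.natDegree_divByMonic _ (Polynomial.monic_X_sub_C c),
    Polynomial.natDegree_X_sub_C, Polynomial.natDegree_sub_C]

private lemma foldr_natDegree (L : List ℂ) (p : Polynomial ℂ) :
    (L.foldr dqPoly p).natDegree ≤ p.natDegree - L.length := by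
  induction L with
  | nil => simp
  | cons a l ih =>
    rw [List.foldr_cons]
    have h1 := dqPoly_natDegree a (l.foldr dqPoly p)
    simp only [List.length_cons]
    omega

private lemma foldr_eq_zero (L : List ℂ) (p : Polynomial ℂ) (h : p.natDegree < L.length) :
    L.foldr dqPoly p = 0 := by
  cases L with
  | nil => simp at h
  | cons a l =>
    have h2 : (l.foldr dqPoly p).natDegree = 0 := by
      have := foldr_natDegree l p
      simp only [List.length_cons] at h
      omega
    rw [List.foldr_cons, Polynomial.eq_C_of_natDegree_eq_zero h2, dqPoly_C]

private lemma dqPoly_root_mul (c : ℂ) (g : Polynomial ℂ) :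
    dqPoly c ((Polynomial.X - Polynomial.C c) * g) = g := by
  have he : Polynomial.eval c ((Polynomial.X - Polynomial.C c) * g) = 0 := by simp
  rw [dqPoly, he, map_zero, sub_zero,
    Polynomial.mul_divByMonic_cancel_left g (Polynomial.monic_X_sub_C c)]

private lemma foldr_mul (L : List ℂ) (g : Polynomial ℂ) :
    L.foldr dqPoly ((L.map fun c => Polynomial.X - Polynomial.C c).prod * g) = g := by
  induction L generalizing g with
  | nil => simp
  | cons a l ih =>
    have he : (Polynomial.X - Polynomial.C a) * (l.map fun c => Polynomial.X - Polynomial.C c).prod * g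
        = (l.map fun c => Polynomial.X - Polynomial.C c).prod * ((Polynomial.X - Polynomial.C a) * g) := by
      ring
    rw [List.foldr_cons, List.map_cons, List.prod_cons, he, ih, dqPoly_root_mul]

private lemma Qiter_mul (s : ℕ) (ζ : Fin s → ℂ) (g : Polynomial ℂ) :
    Qiter s ζ ((∏ k, (Polynomial.X - Polynomial.C (ζ k))) * g) = g := by
  have h : (∏ k, (Polynomial.X - Polynomial.C (ζ k)))
      = ((List.ofFn ζ).map fun c => Polynomial.X - Polynomial.C c).prod := by
    rw [List.map_ofFn, List.prod_ofFn]
    rfl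
  rw [Qiter, h, foldr_mul]

private lemma hq_nodal (s : ℕ) (ζ : Fin s → ℂ) :
    (∏ k, (Polynomial.X - Polynomial.C (ζ k))) = Lagrange.nodal Finset.univ ζ := rfl

private lemma hdiv_nodal (s : ℕ) (ζ : Fin s → ℂ) (i : Fin s) :
    (∏ k, (Polynomial.X - Polynomial.C (ζ k))) /ₘ (Polynomial.X - Polynomial.C (ζ i))
      = Lagrange.nodal (Finset.univ.erase i) ζ := by
  rw [hq_nodal, Lagrange.nodal_eq_mul_nodal_erase (Finset.mem_univ i),
    Polynomial.mul_divByMonic_cancel_left _ (Polynomial.monic_X_sub_C _)]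

private lemma pbasis_eval_lt (s : ℕ) (ζ : Fin s → ℂ) (hinj : Function.Injective ζ)
    {i : ℕ} (h : i < s) (ℓ : Fin s) :
    (pbasis s ζ i).eval (ζ ℓ) = if ℓ = ⟨i, h⟩ then 1 else 0 := by
  classical
  set i' : Fin s := ⟨i, h⟩
  have hder : (Polynomial.derivative (∏ k, (Polynomial.X - Polynomial.C (ζ k)))).eval (ζ i')
      = (Lagrange.nodal (Finset.univ.erase i') ζ).eval (ζ i') := by
    rw [hq_nodal]; exact Lagrange.eval_nodal_derivative_eval_node_eq (Finset.mem_univ i')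
  have hne : (Lagrange.nodal (Finset.univ.erase i') ζ).eval (ζ i') ≠ 0 := by
    rw [Lagrange.eval_nodal]
    refine Finset.prod_ne_zero_iff.mpr fun k hk => ?_
    have hki : k ≠ i' := (Finset.mem_erase.mp hk).1
    exact sub_ne_zero.mpr fun hh => hki (hinj hh.symm)
  rw [pbasis, dif_pos h]
  by_cases hl : ℓ = i'
  · subst hl
    rw [if_pos rfl, Polynomial.eval_mul, Polynomial.eval_C, hder, hdiv_nodal,
      inv_mul_cancel₀ hne]
  · rw [if_neg hl, Polynomial.eval_mul, Polynomial.eval_C, hdiv_nodal,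
      Lagrange.eval_nodal_at_node (Finset.mem_erase.mpr ⟨hl, Finset.mem_univ ℓ⟩), mul_zero]

private lemma Qiter_pbasis_lt (s : ℕ) (ζ : Fin s → ℂ) {i : ℕ} (h : i < s) :
    Qiter s ζ (pbasis s ζ i) = 0 := by
  classical
  apply foldr_eq_zero
  rw [List.length_ofFn]
  have h1 : (pbasis s ζ i).natDegree
      ≤ (Lagrange.nodal (Finset.univ.erase (⟨i, h⟩ : Fin s)) ζ).natDegree := by
    rw [pbasis, dif_pos h, hdiv_nodal]
    exact Polynomial.natDegree_C_mul_le _ _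
  have h2 : (Lagrange.nodal (Finset.univ.erase (⟨i, h⟩ : Fin s)) ζ).natDegree
      = (Finset.univ.erase (⟨i, h⟩ : Fin s)).card := Lagrange.natDegree_nodal
  have h3 : (Finset.univ.erase (⟨i, h⟩ : Fin s)).card = s - 1 := by
    rw [Finset.card_erase_of_mem (Finset.mem_univ _), Finset.card_univ, Fintype.card_fin]
  omega

private lemma pbasis_eval_ge (s : ℕ) (ζ : Fin s → ℂ) {i : ℕ} (h : ¬ i < s) (ℓ : Fin s) :
    (pbasis s ζ i).eval (ζ ℓ) = 0 := by
  rw [pbasis, dif_neg h, Polynomial.eval_mul, hq_nodal,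
    Lagrange.eval_nodal_at_node (Finset.mem_univ ℓ), zero_mul]

private lemma Qiter_pbasis_ge (s : ℕ) (ζ : Fin s → ℂ) {i : ℕ} (h : ¬ i < s) :
    Qiter s ζ (pbasis s ζ i) = Polynomial.X ^ (i - s) := by
  rw [pbasis, dif_neg h, Qiter_mul]

/-- For `s ≥ 1` and distinct `ζ₀, …, ζ_{s-1} ∈ 𝕋`, the family
`(p_j)_{j ≥ 0}` is orthonormal for the `D_μ` inner product
`⟨f₁, f₂⟩ = ∑_{ℓ<s} f₁(ζ_ℓ) conj(f₂(ζ_ℓ)) + ∑_n (Qf₁)^(n) conj((Qf₂)^(n))`. -/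
theorem basis_polynomials_orthonormal
    (s : ℕ) (hs : 1 ≤ s) (ζ : Fin s → ℂ)
    (hζ : ∀ k, ‖ζ k‖ = 1) (hinj : Function.Injective ζ) :
    ∀ i j : ℕ,
      (∑ ℓ : Fin s, (pbasis s ζ i).eval (ζ ℓ) *
          (starRingEnd ℂ) ((pbasis s ζ j).eval (ζ ℓ))) +
        (∑' n : ℕ, (Qiter s ζ (pbasis s ζ i)).coeff n *
          (starRingEnd ℂ) ((Qiter s ζ (pbasis s ζ j)).coeff n)) =
      if i = j then 1 else 0 := by
  classical
  intro i j
  by_cases hi : i < s <;> by_cases hj : j < s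
  · -- both indices below s
    rw [Qiter_pbasis_lt s ζ hi, Qiter_pbasis_lt s ζ hj]
    simp only [Polynomial.coeff_zero, map_zero, mul_zero, tsum_zero, add_zero]
    have hterm : ∀ ℓ : Fin s,
        (pbasis s ζ i).eval (ζ ℓ) * (starRingEnd ℂ) ((pbasis s ζ j).eval (ζ ℓ))
        = if ℓ = ⟨i, hi⟩ then (if ℓ = (⟨j, hj⟩ : Fin s) then (1 : ℂ) else 0) else 0 := by
      intro ℓ
      rw [pbasis_eval_lt s ζ hinj hi, pbasis_eval_lt s ζ hinj hj]
      by_cases h1 : ℓ = (⟨i, hi⟩ : Fin s) <;> by_cases h2 : ℓ = (⟨j, hj⟩ : Fin s) <;>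
        simp [h1, h2]
    rw [Finset.sum_congr rfl fun ℓ _ => hterm ℓ, Finset.sum_ite_eq' Finset.univ]
    simp [Fin.ext_iff]
  · -- i < s ≤ j
    have hij : i ≠ j := by omega
    rw [if_neg hij, Qiter_pbasis_lt s ζ hi]
    simp [pbasis_eval_ge s ζ hj]
  · -- j < s ≤ i
    have hij : i ≠ j := by omega
    rw [if_neg hij, Qiter_pbasis_lt s ζ hj]
    simp [pbasis_eval_ge s ζ hi]
  · -- both indices at least s
    rw [Qiter_pbasis_ge s ζ hi, Qiter_pbasis_ge s ζ hj]
    have hsum0 : (∑ ℓ : Fin s, (pbasis s ζ i).eval (ζ ℓ) *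
        (starRingEnd ℂ) ((pbasis s ζ j).eval (ζ ℓ))) = 0 := by
      simp [pbasis_eval_ge s ζ hi]
    rw [hsum0, zero_add]
    by_cases hij : i = j
    · subst hij
      have hterm : ∀ n : ℕ, (Polynomial.X ^ (i - s) : Polynomial ℂ).coeff n *
          (starRingEnd ℂ) ((Polynomial.X ^ (i - s) : Polynomial ℂ).coeff n)
          = if n = i - s then (1 : ℂ) else 0 := by
        intro n
        by_cases h : n = i - s <;> simp [Polynomial.coeff_X_pow, h]
      rw [tsum_congr hterm, tsum_ite_eq, if_pos rfl]
    · have hne : i - s ≠ j - s := by omega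
      have hterm : ∀ n : ℕ, (Polynomial.X ^ (i - s) : Polynomial ℂ).coeff n *
          (starRingEnd ℂ) ((Polynomial.X ^ (j - s) : Polynomial ℂ).coeff n) = 0 := by
        intro n
        by_cases h : n = i - s
        · have : n ≠ j - s := by omega
          simp [Polynomial.coeff_X_pow, h, this, hne]
        · simp [Polynomial.coeff_X_pow, h]
      rw [tsum_congr hterm, tsum_zero, if_neg hij]

end
end

section
/- Fix s ≥ 1 and distinct points ζ₀, …, ζ_{s−1} ∈ 𝕋, set q(z) = ∏_{k=0}^{s−1}(z − ζ_k), let g ∈ H², a₀, …, a_{s−1} ∈ ℂ, and let f(z) = a₀ + a₁z + ⋯ + a_{s−1}z^{s−1} + q(z)g(z) on 𝔻. Then for every j ≥ 0 the series ∑_{k=s+j}^∞ f̂(k) S_{k−s−j}(ζ₀, …, ζ_{s−1}) converges and its sum equals ĝ(j), where S_m denotes the complete homogeneous symmetric polynomial of degree m evaluated at (ζ₀, …, ζ_{s−1}). -/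
open Complex Filter Metric Topology

noncomputable section

/-- Complete homogeneous symmetric polynomial of degree `k` in `s` variables,
evaluated at `z`. -/
def Sfun (s : ℕ) (z : Fin s → ℂ) (k : ℕ) : ℂ :=
  ∑ m ∈ Finset.univ.sym k, (m.1.map z).prod

namespace CoQfAux

open scoped ENNReal NNReal

/-! ### Complete homogeneous sums over a finset and the basic power series identity -/

variable {ι : Type*} [DecidableEq ι]

def TS (z : ι → ℂ) (A : Finset ι) (k : ℕ) : ℂ := ∑ m ∈ A.sym k, (m.1.map z).prod

lemma TS_zero (z : ι → ℂ) (A : Finset ι) : TS z A 0 = 1 := by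
  simp only [TS, Finset.sym_zero, Finset.sum_singleton]
  rfl

lemma TS_empty_succ (z : ι → ℂ) (k : ℕ) : TS z (∅ : Finset ι) (k + 1) = 0 := by
  simp [TS]

lemma TS_insert (z : ι → ℂ) {a : ι} {A : Finset ι} (ha : a ∉ A) (k : ℕ) :
    TS z (insert a A) (k + 1) = TS z A (k + 1) + z a * TS z (insert a A) k := by
  classical
  have hsplit := Finset.sum_filter_add_sum_filter_not ((insert a A).sym (k+1))
      (fun m => a ∈ m) (fun m => ((m : Sym ι (k+1)).1.map z).prod)
  have h1 : ∑ m ∈ ((insert a A).sym (k+1)).filter (fun m => ¬ a ∈ m), (m.1.map z).prod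
      = TS z A (k+1) := by
    apply Finset.sum_congr
    · ext m
      simp only [Finset.mem_filter, Finset.mem_sym_iff, Finset.mem_insert]
      constructor
      · rintro ⟨h, hm⟩ x hx
        rcases h x hx with rfl | h'
        · exact absurd hx hm
        · exact h'
      · intro h
        exact ⟨fun x hx => Or.inr (h x hx), fun hmem => ha (h a hmem)⟩
    · intros; rfl
  have h2 : ∑ m ∈ ((insert a A).sym (k+1)).filter (fun m => a ∈ m), (m.1.map z).prod
      = z a * TS z (insert a A) k := by
    rw [TS, Finset.mul_sum]
    symm
    refine Finset.sum_bij (fun m _ => a ::ₛ m) ?_ ?_ ?_ ?_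
    · intro m hm
      simp only [Finset.mem_filter, Finset.mem_sym_iff] at hm ⊢
      refine ⟨fun x hx => ?_, Sym.mem_cons_self a m⟩
      rcases Sym.mem_cons.mp hx with rfl | h'
      · exact Finset.mem_insert_self _ _
      · exact hm x h'
    · intro m1 h1' m2 h2' h
      exact (Sym.cons_inj_right a m1 m2).mp h
    · intro m hm
      simp only [Finset.mem_filter, Finset.mem_sym_iff] at hm
      obtain ⟨hmem, hma⟩ := hm
      refine ⟨m.erase a hma, ?_, Sym.cons_erase hma⟩
      simp only [Finset.mem_sym_iff]
      intro x hx
      have hxm : x ∈ m := by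
        have hc : (↑(m.erase a hma) : Multiset ι) = (↑m : Multiset ι).erase a := Sym.coe_erase hma
        have : x ∈ (↑(m.erase a hma) : Multiset ι) := hx
        rw [hc] at this
        exact Multiset.mem_of_mem_erase this
      exact hmem x hxm
    · intro m hm
      simp [Sym.coe_cons]
  rw [TS, ← hsplit, h1, h2]
  ring

lemma geom_inv (a : ℂ) :
    (1 - PowerSeries.C a * PowerSeries.X) * PowerSeries.mk (fun n => a ^ n) = 1 := by
  ext n
  cases n with
  | zero => simp
  | succ n =>
    simp only [sub_mul, one_mul, map_sub, mul_assoc, PowerSeries.coeff_C_mul,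
      PowerSeries.coeff_succ_X_mul, PowerSeries.coeff_mk, PowerSeries.coeff_one]
    simp [pow_succ, mul_comm]

lemma key1 (z : ι → ℂ) (A : Finset ι) :
    (∏ a ∈ A, (1 - PowerSeries.C (z a) * PowerSeries.X)) * PowerSeries.mk (TS z A) = 1 := by
  classical
  induction A using Finset.induction with
  | empty =>
    have : PowerSeries.mk (TS z (∅ : Finset ι)) = 1 := by
      ext n
      cases n with
      | zero => simp [TS_zero]
      | succ n => simp [TS_empty_succ]
    simp [this]
  | @insert a A ha ih =>
    have hstep : (1 - PowerSeries.C (z a) * PowerSeries.X) * PowerSeries.mk (TS z (insert a A))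
        = PowerSeries.mk (TS z A) := by
      ext n
      cases n with
      | zero => simp [TS_zero]
      | succ n =>
        simp only [sub_mul, one_mul, mul_assoc, map_sub, PowerSeries.coeff_mk,
          PowerSeries.coeff_C_mul, PowerSeries.coeff_succ_X_mul]
        rw [TS_insert z ha n]
        ring
    rw [Finset.prod_insert ha, mul_comm (1 - PowerSeries.C (z a) * PowerSeries.X), mul_assoc,
      hstep, ih]

lemma key1univ (s : ℕ) (ζ : Fin s → ℂ) :
    (∏ k : Fin s, (1 - PowerSeries.C (ζ k) * PowerSeries.X)) * PowerSeries.mk (Sfun s ζ) = 1 :=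
  key1 ζ Finset.univ

/-! ### Lagrange interpolation identity and the uniform bound on `Sfun` -/

variable {s : ℕ} {ζ : Fin s → ℂ}

lemma lagrange_one (hs : 1 ≤ s) (hζ : ∀ k, ‖ζ k‖ = 1)
    (hinj : Function.Injective ζ) :
    ∑ k : Fin s, Polynomial.C (∏ l ∈ Finset.univ.erase k, (ζ k / (ζ k - ζ l))) *
      ∏ l ∈ Finset.univ.erase k, (1 - Polynomial.C (ζ l) * Polynomial.X) = 1 := by
  classical
  have hz : ∀ k, ζ k ≠ 0 := by
    intro k h
    have := hζ k
    rw [h] at this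
    simp at this
  set L : Polynomial ℂ := ∑ k : Fin s, Polynomial.C (∏ l ∈ Finset.univ.erase k, (ζ k / (ζ k - ζ l))) *
      ∏ l ∈ Finset.univ.erase k, (1 - Polynomial.C (ζ l) * Polynomial.X) with hLdef
  have h01 : ∀ c : ℂ, (1 - Polynomial.C c * Polynomial.X).natDegree ≤ 1 := by
    intro c
    refine le_trans (Polynomial.natDegree_sub_le _ _) ?_
    simp only [Polynomial.natDegree_one, max_le_iff]
    exact ⟨Nat.zero_le _, le_trans (Polynomial.natDegree_C_mul_le _ _) Polynomial.natDegree_X_le⟩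
  have hdegL : L.natDegree ≤ s - 1 := by
    refine Polynomial.natDegree_sum_le_of_forall_le _ _ (fun k _ => ?_)
    refine le_trans (Polynomial.natDegree_C_mul_le _ _) ?_
    refine le_trans (Polynomial.natDegree_prod_le _ _) ?_
    refine le_trans (Finset.sum_le_card_nsmul _ _ 1 (fun l _ => h01 (ζ l))) ?_
    simp [Finset.card_erase_of_mem]
  have hsub : L - 1 = 0 := by
    refine Polynomial.eq_zero_of_natDegree_lt_card_of_eval_eq_zero (L - 1)
      (f := fun m : Fin s => (ζ m)⁻¹) ?_ ?_ ?_
    · intro m1 m2 h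
      exact hinj (inv_injective h)
    · intro m
      have hevalL : L.eval (ζ m)⁻¹ = 1 := by
        rw [hLdef, Polynomial.eval_finset_sum]
        rw [Finset.sum_eq_single m]
        · rw [Polynomial.eval_mul, Polynomial.eval_C, Polynomial.eval_prod]
          rw [← Finset.prod_mul_distrib]
          refine Finset.prod_eq_one (fun l hl => ?_)
          have hlm : l ≠ m := (Finset.mem_erase.mp hl).1
          have hne : ζ m - ζ l ≠ 0 := sub_ne_zero.mpr (fun h => hlm (hinj h).symm)
          simp only [Polynomial.eval_sub, Polynomial.eval_one, Polynomial.eval_mul,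
            Polynomial.eval_C, Polynomial.eval_X]
          field_simp
          rw [mul_sub, mul_one, mul_comm (ζ m) (ζ l / ζ m), div_mul_cancel₀ _ (hz m)]
        · intro k _ hkm
          rw [Polynomial.eval_mul, Polynomial.eval_prod]
          have : m ∈ Finset.univ.erase k := Finset.mem_erase.mpr ⟨Ne.symm hkm, Finset.mem_univ m⟩
          have hzero : Polynomial.eval (ζ m)⁻¹ (1 - Polynomial.C (ζ m) * Polynomial.X) = 0 := by
            simp only [Polynomial.eval_sub, Polynomial.eval_one, Polynomial.eval_mul,
              Polynomial.eval_C, Polynomial.eval_X]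
            rw [mul_inv_cancel₀ (hz m), sub_self]
          rw [Finset.prod_eq_zero
            (f := fun l => Polynomial.eval (ζ m)⁻¹ (1 - Polynomial.C (ζ l) * Polynomial.X))
            this hzero, mul_zero]
        · intro h
          exact absurd (Finset.mem_univ m) h
      simp [hevalL]
    · have : (L - 1).natDegree ≤ s - 1 := by
        refine le_trans (Polynomial.natDegree_sub_le _ _) ?_
        simp only [Polynomial.natDegree_one, max_le_iff]
        exact ⟨hdegL, Nat.zero_le _⟩
      have hcard : Fintype.card (Fin s) = s := Fintype.card_fin s
      omega
  have := sub_eq_zero.mp hsub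
  simpa [hLdef] using this

lemma S_repr (hs : 1 ≤ s) (hζ : ∀ k, ‖ζ k‖ = 1)
    (hinj : Function.Injective ζ) (i : ℕ) :
    Sfun s ζ i = ∑ k : Fin s,
      (∏ l ∈ Finset.univ.erase k, (ζ k / (ζ k - ζ l))) * (ζ k) ^ i := by
  classical
  set A : Fin s → ℂ := fun k => ∏ l ∈ Finset.univ.erase k, (ζ k / (ζ k - ζ l)) with hA
  set P : PowerSeries ℂ := ∏ k : Fin s, (1 - PowerSeries.C (ζ k) * PowerSeries.X) with hP
  set H : PowerSeries ℂ := PowerSeries.mk (Sfun s ζ) with hHdef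
  have hPH : P * H = 1 := key1univ s ζ
  set G : Fin s → PowerSeries ℂ := fun k => PowerSeries.mk (fun n => (ζ k) ^ n) with hG
  have hPG : ∀ k : Fin s, ∏ l ∈ Finset.univ.erase k, (1 - PowerSeries.C (ζ l) * PowerSeries.X)
      = P * G k := by
    intro k
    have h1 : P = (1 - PowerSeries.C (ζ k) * PowerSeries.X) *
        ∏ l ∈ Finset.univ.erase k, (1 - PowerSeries.C (ζ l) * PowerSeries.X) :=
      (Finset.mul_prod_erase _ _ (Finset.mem_univ k)).symm
    calc ∏ l ∈ Finset.univ.erase k, (1 - PowerSeries.C (ζ l) * PowerSeries.X)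
        = (∏ l ∈ Finset.univ.erase k, (1 - PowerSeries.C (ζ l) * PowerSeries.X)) *
          ((1 - PowerSeries.C (ζ k) * PowerSeries.X) * G k) := by
          rw [geom_inv (ζ k), mul_one]
      _ = P * G k := by rw [h1]; ring
  have hL := lagrange_one hs hζ hinj
  have hL' : ∑ k : Fin s, PowerSeries.C (A k) *
      ∏ l ∈ Finset.univ.erase k, (1 - PowerSeries.C (ζ l) * PowerSeries.X) = 1 := by
    have hc := congrArg (Polynomial.coeToPowerSeries.ringHom (R := ℂ)) hL
    rw [map_one, map_sum] at hc
    simp only [map_mul, map_prod, map_sub, map_one,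
      Polynomial.coeToPowerSeries.ringHom_apply, Polynomial.coe_C, Polynomial.coe_X] at hc
    simp only [hA, map_prod]
    exact hc
  have hHsum : H = ∑ k : Fin s, PowerSeries.C (A k) * G k := by
    calc H = H * 1 := (mul_one H).symm
    _ = H * ∑ k : Fin s, PowerSeries.C (A k) *
        ∏ l ∈ Finset.univ.erase k, (1 - PowerSeries.C (ζ l) * PowerSeries.X) := by rw [hL']
    _ = ∑ k : Fin s, PowerSeries.C (A k) * G k := by
        rw [Finset.mul_sum]
        refine Finset.sum_congr rfl (fun k _ => ?_)
        rw [hPG k]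
        calc H * (PowerSeries.C (A k) * (P * G k))
            = PowerSeries.C (A k) * ((P * H) * G k) := by ring
        _ = PowerSeries.C (A k) * G k := by rw [hPH, one_mul]
  have hco := congrArg (PowerSeries.coeff i) hHsum
  rw [hHdef, map_sum] at hco
  simpa [PowerSeries.coeff_mk, hA, hG] using hco

lemma S_bound (hs : 1 ≤ s) (hζ : ∀ k, ‖ζ k‖ = 1)
    (hinj : Function.Injective ζ) :
    ∃ C0 : ℝ, 0 ≤ C0 ∧ ∀ i, ‖Sfun s ζ i‖ ≤ C0 := by
  refine ⟨∑ k : Fin s, ‖∏ l ∈ Finset.univ.erase k, (ζ k / (ζ k - ζ l))‖, by positivity, fun i => ?_⟩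
  rw [S_repr hs hζ hinj i]
  refine le_trans (norm_sum_le _ _) (Finset.sum_le_sum (fun k _ => ?_))
  rw [norm_mul, norm_pow]
  have h1 : ‖ζ k‖ = 1 := hζ k
  rw [h1, one_pow, mul_one]

/-! ### The polynomial `Q` and the reversed coefficients -/

lemma reflect_one_X_sub_C (c : ℂ) :
    Polynomial.reflect 1 (Polynomial.X - Polynomial.C c) = 1 - Polynomial.C c * Polynomial.X := by
  rw [sub_eq_add_neg, Polynomial.reflect_add, Polynomial.reflect_neg, Polynomial.reflect_C,
    ← pow_one (Polynomial.X : Polynomial ℂ), Polynomial.reflect_monomial,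
    Polynomial.revAt_le (le_refl 1)]
  simp
  ring

lemma reflect_prod (ζ : Fin s → ℂ) (A : Finset (Fin s)) :
    Polynomial.reflect A.card (∏ k ∈ A, (Polynomial.X - Polynomial.C (ζ k))) =
      ∏ k ∈ A, (1 - Polynomial.C (ζ k) * Polynomial.X) := by
  classical
  induction A using Finset.induction with
  | empty => simp
  | @insert a A ha ih =>
    rw [Finset.card_insert_of_notMem ha, Finset.prod_insert ha, Finset.prod_insert ha]
    have hdegA : (∏ k ∈ A, (Polynomial.X - Polynomial.C (ζ k))).natDegree ≤ A.card := by
      refine le_trans (Polynomial.natDegree_prod_le _ _) ?_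
      refine le_trans (Finset.sum_le_card_nsmul _ _ 1
        (fun l _ => le_of_eq (Polynomial.natDegree_X_sub_C (ζ l)))) (by simp)
    have hdeg1 : (Polynomial.X - Polynomial.C (ζ a)).natDegree ≤ 1 :=
      le_of_eq (Polynomial.natDegree_X_sub_C (ζ a))
    have := Polynomial.reflect_mul (Polynomial.X - Polynomial.C (ζ a))
      (∏ k ∈ A, (Polynomial.X - Polynomial.C (ζ k))) hdeg1 hdegA
    rw [add_comm 1 A.card] at this
    rw [this, ih, reflect_one_X_sub_C]

lemma Ppoly_coeff_eq (ζ : Fin s → ℂ) (b : ℕ) (hb : b ≤ s) :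
    (∏ k : Fin s, (1 - Polynomial.C (ζ k) * Polynomial.X)).coeff b =
      (∏ k : Fin s, (Polynomial.X - Polynomial.C (ζ k))).coeff (s - b) := by
  have h := reflect_prod ζ Finset.univ
  rw [Finset.card_univ, Fintype.card_fin] at h
  rw [← h, Polynomial.coeff_reflect, Polynomial.revAt_le hb]

lemma Ppoly_natDegree_le (ζ : Fin s → ℂ) :
    (∏ k : Fin s, (1 - Polynomial.C (ζ k) * Polynomial.X)).natDegree ≤ s := by
  refine le_trans (Polynomial.natDegree_prod_le _ _) ?_
  have h01 : ∀ c : ℂ, (1 - Polynomial.C c * Polynomial.X).natDegree ≤ 1 := by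
    intro c
    refine le_trans (Polynomial.natDegree_sub_le _ _) ?_
    simp only [Polynomial.natDegree_one, max_le_iff]
    exact ⟨Nat.zero_le _, le_trans (Polynomial.natDegree_C_mul_le _ _) Polynomial.natDegree_X_le⟩
  refine le_trans (Finset.sum_le_card_nsmul _ _ 1 (fun l _ => h01 (ζ l))) (by simp)

lemma coePpoly (ζ : Fin s → ℂ) :
    ((∏ k : Fin s, (1 - Polynomial.C (ζ k) * Polynomial.X) : Polynomial ℂ) : PowerSeries ℂ) =
      ∏ k : Fin s, (1 - PowerSeries.C (ζ k) * PowerSeries.X) := by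
  rw [← Polynomial.coeToPowerSeries.ringHom_apply, map_prod]
  refine Finset.prod_congr rfl (fun k _ => ?_)
  simp only [map_sub, map_one, map_mul, Polynomial.coeToPowerSeries.ringHom_apply,
    Polynomial.coe_C, Polynomial.coe_X]

lemma keyCoeff (ζ : Fin s → ℂ) (r : ℕ) :
    ∑ b ∈ Finset.range (s + 1),
      (if b ≤ r then
        (∏ k : Fin s, (1 - Polynomial.C (ζ k) * Polynomial.X)).coeff b * Sfun s ζ (r - b)
      else 0) = if r = 0 then 1 else 0 := by
  classical
  set Pp := ∏ k : Fin s, (1 - Polynomial.C (ζ k) * Polynomial.X) with hPp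
  have hc0 : ∀ b, s < b → Pp.coeff b = 0 := by
    intro b hbs
    exact Polynomial.coeff_eq_zero_of_natDegree_lt (lt_of_le_of_lt (Ppoly_natDegree_le ζ) hbs)
  have hrange : ∑ b ∈ Finset.range (r + 1), Pp.coeff b * Sfun s ζ (r - b)
      = if r = 0 then 1 else 0 := by
    have h := congrArg (PowerSeries.coeff r) (key1univ s ζ)
    rw [PowerSeries.coeff_mul, Finset.Nat.sum_antidiagonal_eq_sum_range_succ_mk] at h
    rw [PowerSeries.coeff_one] at h
    rw [← h]
    refine Finset.sum_congr rfl (fun b _ => ?_)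
    rw [← coePpoly ζ, Polynomial.coeff_coe, PowerSeries.coeff_mk]
  set F : ℕ → ℂ := fun b => if b ≤ r then Pp.coeff b * Sfun s ζ (r - b) else 0 with hF
  have hFzero_gt_r : ∀ b, r < b → F b = 0 := by
    intro b hb; simp [hF, Nat.not_le.mpr hb]
  have hFzero_gt_s : ∀ b, s < b → F b = 0 := by
    intro b hb; simp [hF, hc0 b hb]
  set M := s + r + 2 with hM
  have e1 : ∑ b ∈ Finset.range (s + 1), F b = ∑ b ∈ Finset.range M, F b := by
    refine Finset.sum_subset (Finset.range_subset_range.mpr (by omega)) (fun b _ hb => ?_)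
    rw [Finset.mem_range, not_lt] at hb
    exact hFzero_gt_s b (by omega)
  have e2 : ∑ b ∈ Finset.range (r + 1), F b = ∑ b ∈ Finset.range M, F b := by
    refine Finset.sum_subset (Finset.range_subset_range.mpr (by omega)) (fun b _ hb => ?_)
    rw [Finset.mem_range, not_lt] at hb
    exact hFzero_gt_r b (by omega)
  have e3 : ∑ b ∈ Finset.range (r + 1), F b
      = ∑ b ∈ Finset.range (r + 1), Pp.coeff b * Sfun s ζ (r - b) := by
    refine Finset.sum_congr rfl (fun b hb => ?_)
    have : b ≤ r := Nat.lt_succ_iff.mp (Finset.mem_range.mp hb)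
    simp [hF, this]
  calc ∑ b ∈ Finset.range (s + 1), F b = ∑ b ∈ Finset.range M, F b := e1
  _ = ∑ b ∈ Finset.range (r + 1), F b := e2.symm
  _ = ∑ b ∈ Finset.range (r + 1), Pp.coeff b * Sfun s ζ (r - b) := e3
  _ = if r = 0 then 1 else 0 := hrange

/-! ### Uniqueness of power series coefficients -/

lemma coeff_unique (c d : ℕ → ℂ) (F : ℂ → ℂ)
    (hc : ∀ z ∈ Metric.ball (0 : ℂ) 1, HasSum (fun n => c n * z ^ n) (F z))
    (hd : ∀ z ∈ Metric.ball (0 : ℂ) 1, HasSum (fun n => d n * z ^ n) (F z)) : c = d := by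
  have key : ∀ e : ℕ → ℂ, (∀ z ∈ Metric.ball (0 : ℂ) 1, HasSum (fun n => e n * z ^ n) (F z)) →
      HasFPowerSeriesOnBall F (FormalMultilinearSeries.ofScalars ℂ e) 0 (1/2) := by
    intro e he
    have h34 : ((3/4 : ℝ) : ℂ) ∈ Metric.ball (0 : ℂ) 1 := by
      simp only [Metric.mem_ball, dist_zero_right, Complex.norm_real, Real.norm_eq_abs]
      rw [_root_.abs_of_nonneg (by norm_num : (0:ℝ) ≤ 3/4)]
      norm_num
    have hsum := (he _ h34).summable
    have htend : Tendsto (fun n => ‖e n * ((3/4 : ℝ) : ℂ) ^ n‖) atTop (𝓝 0) := by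
      simpa using hsum.tendsto_atTop_zero.norm
    obtain ⟨M, hM⟩ := htend.bddAbove_range
    have hMb : ∀ n, ‖e n‖ * (3/4 : ℝ) ^ n ≤ M := by
      intro n
      have := hM (Set.mem_range_self n)
      rwa [norm_mul, norm_pow, Complex.norm_real, Real.norm_eq_abs,
        _root_.abs_of_nonneg (by norm_num : (0:ℝ) ≤ 3/4)] at this
    have hrad : (1/2 : ℝ≥0∞) ≤ (FormalMultilinearSeries.ofScalars ℂ e).radius := by
      have h34rad : ((3/4 : ℝ≥0) : ℝ≥0∞) ≤ (FormalMultilinearSeries.ofScalars ℂ e).radius := by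
        refine FormalMultilinearSeries.le_radius_of_bound _ M (fun n => ?_)
        rw [FormalMultilinearSeries.ofScalars_norm]
        have h34c : ((3/4 : ℝ≥0) : ℝ) = (3/4 : ℝ) := by norm_num
        rw [h34c]
        exact hMb n
      refine le_trans ?_ h34rad
      have h1 : (1/2 : ℝ≥0∞) = ((1/2 : ℝ≥0) : ℝ≥0∞) := by
        rw [ENNReal.coe_div (by norm_num)]; norm_num
      rw [h1, ENNReal.coe_le_coe, div_le_div_iff₀ (by norm_num) (by norm_num)]
      norm_num
    refine ⟨hrad, by norm_num, ?_⟩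
    intro y hy
    rw [mem_emetric_ball_zero_iff] at hy
    have hy1 : ‖y‖ < 1 := by
      have h2 : (‖y‖₊ : ℝ≥0∞) < 1 := lt_of_lt_of_le hy (by
        rw [ENNReal.div_le_iff (by norm_num) (by norm_num)]
        norm_num)
      rw [← ENNReal.coe_one, ENNReal.coe_lt_coe, ← NNReal.coe_lt_coe] at h2
      simpa using h2
    have := he y (by simpa [Metric.mem_ball, dist_zero_right] using hy1)
    simp only [FormalMultilinearSeries.ofScalars_apply_eq, smul_eq_mul, zero_add]
    exact this
  have h1 := (key c hc).hasFPowerSeriesAt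
  have h2 := (key d hd).hasFPowerSeriesAt
  exact FormalMultilinearSeries.ofScalars_series_injective ℂ ℂ
    (h1.eq_formalMultilinearSeries h2)

/-! ### The HasSum for the candidate coefficients of `f` -/

lemma hasSum_shift (c : ℂ) (m : ℕ) (gh : ℕ → ℂ) (z : ℂ) (G : ℂ)
    (hg : HasSum (fun n => gh n * z ^ n) G) :
    HasSum (fun n => c * (if m ≤ n then gh (n - m) else 0) * z ^ n) (c * z ^ m * G) := by
  have h1 : HasSum (fun n => c * z ^ m * (gh n * z ^ n)) (c * z ^ m * G) := hg.mul_left _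
  have hinj : Function.Injective (fun n : ℕ => n + m) := fun x y h => by simpa using h
  have h0 : ∀ x ∉ Set.range (fun n : ℕ => n + m),
      c * (if m ≤ x then gh (x - m) else 0) * z ^ x = 0 := by
    intro x hx
    have : ¬ m ≤ x := fun hle => hx ⟨x - m, by simp; omega⟩
    simp [this]
  rw [← Function.Injective.hasSum_iff hinj h0]
  have heq : ((fun n => c * (if m ≤ n then gh (n - m) else 0) * z ^ n) ∘ (fun n : ℕ => n + m))
      = fun n => c * z ^ m * (gh n * z ^ n) := by
    funext n
    simp only [Function.comp_apply, Nat.le_add_left, if_pos, Nat.add_sub_cancel]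
    rw [pow_add]
    ring
  rw [heq]
  exact h1

lemma hasSum_Fh (s : ℕ) (ζ : Fin s → ℂ) (a : Fin s → ℂ) (g : ℂ → ℂ) (gh : ℕ → ℂ)
    (hg : ∀ z ∈ Metric.ball (0 : ℂ) 1, HasSum (fun n => gh n * z ^ n) (g z))
    (f : ℂ → ℂ)
    (hf : ∀ z ∈ Metric.ball (0 : ℂ) 1,
      f z = (∑ j : Fin s, a j * z ^ (j : ℕ)) + (∏ k, (z - ζ k)) * g z) :
    ∀ z ∈ Metric.ball (0 : ℂ) 1,
      HasSum (fun n =>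
        ((if h : n < s then a ⟨n, h⟩ else 0) +
          ∑ m ∈ Finset.range (s + 1),
            (∏ k : Fin s, (Polynomial.X - Polynomial.C (ζ k))).coeff m *
              (if m ≤ n then gh (n - m) else 0)) * z ^ n) (f z) := by
  intro z hz
  set Q : Polynomial ℂ := ∏ k : Fin s, (Polynomial.X - Polynomial.C (ζ k)) with hQ
  have hQdeg : Q.natDegree ≤ s := by
    refine le_trans (Polynomial.natDegree_prod_le _ _) ?_
    refine le_trans (Finset.sum_le_card_nsmul _ _ 1
      (fun l _ => le_of_eq (Polynomial.natDegree_X_sub_C (ζ l)))) (by simp)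
  have hQeval : ∏ k : Fin s, (z - ζ k) = ∑ m ∈ Finset.range (s + 1), Q.coeff m * z ^ m := by
    have := Polynomial.eval_eq_sum_range' (Nat.lt_succ_of_le hQdeg) z
    rw [← this, hQ, Polynomial.eval_prod]
    refine Finset.prod_congr rfl (fun k _ => by simp)
  have hpoly : HasSum (fun n => (if h : n < s then a ⟨n, h⟩ else 0) * z ^ n)
      (∑ j : Fin s, a j * z ^ (j : ℕ)) := by
    have heq : (∑ j : Fin s, a j * z ^ (j : ℕ))
        = ∑ n ∈ Finset.range s, (if h : n < s then a ⟨n, h⟩ else 0) * z ^ n := by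
      rw [← Fin.sum_univ_eq_sum_range (fun n => (if h : n < s then a ⟨n, h⟩ else 0) * z ^ n)]
      refine Finset.sum_congr rfl (fun j _ => ?_)
      simp [j.isLt]
    rw [heq]
    refine hasSum_sum_of_ne_finset_zero (fun n hn => ?_)
    rw [Finset.mem_range, not_lt] at hn
    simp [Nat.not_lt.mpr hn]
  have hprod : HasSum (fun n =>
      (∑ m ∈ Finset.range (s + 1), Q.coeff m * (if m ≤ n then gh (n - m) else 0)) * z ^ n)
      ((∏ k : Fin s, (z - ζ k)) * g z) := by
    have hterm : ∀ m ∈ Finset.range (s + 1), HasSum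
        (fun n => Q.coeff m * (if m ≤ n then gh (n - m) else 0) * z ^ n)
        (Q.coeff m * z ^ m * g z) := fun m _ => hasSum_shift _ m gh z _ (hg z hz)
    have := hasSum_sum hterm
    have hfin : ∑ m ∈ Finset.range (s + 1), Q.coeff m * z ^ m * g z
        = (∏ k : Fin s, (z - ζ k)) * g z := by
      rw [hQeval, Finset.sum_mul]
    have hfun : (fun n =>
        (∑ m ∈ Finset.range (s + 1), Q.coeff m * (if m ≤ n then gh (n - m) else 0)) * z ^ n)
        = fun n => ∑ m ∈ Finset.range (s + 1),
            Q.coeff m * (if m ≤ n then gh (n - m) else 0) * z ^ n := by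
      funext n
      rw [Finset.sum_mul]
    rw [hfun, ← hfin]
    exact this
  rw [hf z hz]
  have hfun2 : (fun n =>
      ((if h : n < s then a ⟨n, h⟩ else 0) +
        ∑ m ∈ Finset.range (s + 1), Q.coeff m * (if m ≤ n then gh (n - m) else 0)) * z ^ n)
      = fun n => (if h : n < s then a ⟨n, h⟩ else 0) * z ^ n +
        (∑ m ∈ Finset.range (s + 1), Q.coeff m * (if m ≤ n then gh (n - m) else 0)) * z ^ n :=
    funext fun n => add_mul _ _ _
  rw [hfun2]
  exact hpoly.add hprod

end CoQfAux

/-- For `s ≥ 1`, distinct `ζ₀, …, ζ_{s-1} ∈ 𝕋`,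
`q(z) = ∏ (z - ζ_k)`, `g ∈ H²` and `f(z) = a₀ + ⋯ + a_{s-1} z^{s-1} + q(z) g(z)` on
`𝔻`:  for every `j ≥ 0` the series `∑_{k=s+j}^∞ fh(k) S_{k-s-j}(ζ₀,…,ζ_{s-1})`
converges with sum `gh(j)`. -/
theorem coefficients_of_Qf_via_hsymm
    (s : ℕ) (hs : 1 ≤ s) (ζ : Fin s → ℂ)
    (hζ : ∀ k, ‖ζ k‖ = 1) (hinj : Function.Injective ζ)
    (g : ℂ → ℂ) (gh : ℕ → ℂ)
    (hg : ∀ z ∈ Metric.ball (0 : ℂ) 1, HasSum (fun n => gh n * z ^ n) (g z))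
    (hg2 : Summable (fun n => ‖gh n‖ ^ 2))
    (a : Fin s → ℂ) (f : ℂ → ℂ)
    (hf : ∀ z ∈ Metric.ball (0 : ℂ) 1,
      f z = (∑ j : Fin s, a j * z ^ (j : ℕ)) + (∏ k, (z - ζ k)) * g z)
    (fh : ℕ → ℂ)
    (hfh : ∀ z ∈ Metric.ball (0 : ℂ) 1, HasSum (fun n => fh n * z ^ n) (f z)) :
    ∀ j : ℕ,
      Tendsto (fun N => ∑ i ∈ Finset.range N, fh (s + j + i) * Sfun s ζ i)
        atTop (𝓝 (gh j)) := by
  classical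
  intro j
  set Q : Polynomial ℂ := ∏ k : Fin s, (Polynomial.X - Polynomial.C (ζ k)) with hQ
  set Pp : Polynomial ℂ := ∏ k : Fin s, (1 - Polynomial.C (ζ k) * Polynomial.X) with hPp
  set S : ℕ → ℂ := Sfun s ζ with hS
  set u : ℕ → ℂ := fun r => gh (j + r) with hu
  -- identify the coefficients of f
  have hfh_eq : fh = fun n =>
      ((if h : n < s then a ⟨n, h⟩ else 0) +
        ∑ m ∈ Finset.range (s + 1), Q.coeff m * (if m ≤ n then gh (n - m) else 0)) :=
    CoQfAux.coeff_unique _ _ f hfh (CoQfAux.hasSum_Fh s ζ a g gh hg f hf)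
  -- rewrite fh (s+j+i) through the reversed coefficients
  have hfh_val : ∀ i : ℕ, fh (s + j + i) =
      ∑ b ∈ Finset.range (s + 1), Pp.coeff b * u (i + b) := by
    intro i
    rw [hfh_eq]
    have hns : ¬ (s + j + i < s) := by omega
    simp only [hns, dif_neg, not_false_iff, zero_add]
    have h1 : ∑ m ∈ Finset.range (s + 1), Q.coeff m * (if m ≤ s + j + i then gh (s + j + i - m) else 0)
        = ∑ m ∈ Finset.range (s + 1), Q.coeff m * gh (s + j + i - m) := by
      refine Finset.sum_congr rfl (fun m hm => ?_)
      have : m ≤ s + j + i := by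
        have := Finset.mem_range.mp hm; omega
      rw [if_pos this]
    rw [h1]
    rw [← Finset.sum_range_reflect (fun m => Q.coeff m * gh (s + j + i - m)) (s + 1)]
    refine Finset.sum_congr rfl (fun b hb => ?_)
    have hbs : b ≤ s := by
      have := Finset.mem_range.mp hb; omega
    have hidx : s + 1 - 1 - b = s - b := by omega
    rw [hidx]
    rw [← CoQfAux.Ppoly_coeff_eq ζ b hbs]
    have hgh : s + j + i - (s - b) = j + (i + b) := by omega
    rw [hgh]
  -- a small reindexing helper
  have ite_sum_range : ∀ (R b : ℕ) (v : ℕ → ℂ),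
      ∑ r ∈ Finset.range R, (if b ≤ r then v r else 0)
        = ∑ i ∈ Finset.range (R - b), v (b + i) := by
    intro R b v
    rw [← Finset.sum_filter]
    have hfil : (Finset.range R).filter (fun r => b ≤ r) = Finset.Ico b R := by
      ext x
      simp only [Finset.mem_filter, Finset.mem_range, Finset.mem_Ico]
      omega
    rw [hfil, Finset.sum_Ico_eq_sum_range]
  -- the global identity
  have hglobal : ∀ R : ℕ, 1 ≤ R →
      gh j = ∑ b ∈ Finset.range (s + 1), ∑ i ∈ Finset.range (R - b),
        Pp.coeff b * (S i * u (i + b)) := by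
    intro R hR
    have step1 : gh j = ∑ r ∈ Finset.range R, (if r = 0 then (1:ℂ) else 0) * u r := by
      rw [Finset.sum_eq_single_of_mem 0 (Finset.mem_range.mpr hR)]
      · simp [hu]
      · intro r _ hr
        simp [hr]
    have step2 : ∀ r : ℕ, ((if r = 0 then (1:ℂ) else 0)) * u r
        = ∑ b ∈ Finset.range (s + 1), (if b ≤ r then Pp.coeff b * (S (r - b) * u r) else 0) := by
      intro r
      have hk := CoQfAux.keyCoeff ζ r
      rw [← hPp, ← hS] at hk
      rw [← hk, Finset.sum_mul]
      refine Finset.sum_congr rfl (fun b _ => ?_)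
      rw [ite_mul, zero_mul, mul_assoc]
    calc gh j = ∑ r ∈ Finset.range R, (if r = 0 then (1:ℂ) else 0) * u r := step1
    _ = ∑ r ∈ Finset.range R, ∑ b ∈ Finset.range (s + 1),
        (if b ≤ r then Pp.coeff b * (S (r - b) * u r) else 0) :=
      Finset.sum_congr rfl (fun r _ => step2 r)
    _ = ∑ b ∈ Finset.range (s + 1), ∑ r ∈ Finset.range R,
        (if b ≤ r then Pp.coeff b * (S (r - b) * u r) else 0) := Finset.sum_comm
    _ = ∑ b ∈ Finset.range (s + 1), ∑ i ∈ Finset.range (R - b),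
        Pp.coeff b * (S (b + i - b) * u (b + i)) :=
      Finset.sum_congr rfl (fun b _ => ite_sum_range R b _)
    _ = ∑ b ∈ Finset.range (s + 1), ∑ i ∈ Finset.range (R - b),
        Pp.coeff b * (S i * u (i + b)) := by
      refine Finset.sum_congr rfl (fun b _ => Finset.sum_congr rfl (fun i _ => ?_))
      have h1 : b + i - b = i := by omega
      have h2 : b + i = i + b := by omega
      rw [h1, h2]
  -- the main finite rearrangement
  have main : ∀ N : ℕ, 1 ≤ N →
      ∑ i ∈ Finset.range N, fh (s + j + i) * S i
        = gh j - ∑ b ∈ Finset.range (s + 1), ∑ t ∈ Finset.range (s - b),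
            Pp.coeff b * (S (N + t) * u (N + t + b)) := by
    intro N hN
    have hT : ∑ i ∈ Finset.range N, fh (s + j + i) * S i
        = ∑ b ∈ Finset.range (s + 1), ∑ i ∈ Finset.range N, Pp.coeff b * (S i * u (i + b)) := by
      calc ∑ i ∈ Finset.range N, fh (s + j + i) * S i
          = ∑ i ∈ Finset.range N, ∑ b ∈ Finset.range (s + 1),
              Pp.coeff b * (S i * u (i + b)) := by
            refine Finset.sum_congr rfl (fun i _ => ?_)
            rw [hfh_val i, Finset.sum_mul]
            refine Finset.sum_congr rfl (fun b _ => ?_)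
            ring
      _ = ∑ b ∈ Finset.range (s + 1), ∑ i ∈ Finset.range N,
            Pp.coeff b * (S i * u (i + b)) := Finset.sum_comm
    rw [hT, eq_sub_iff_add_eq, ← Finset.sum_add_distrib, hglobal (N + s) (by omega)]
    refine Finset.sum_congr rfl (fun b hb => ?_)
    have hbs : b ≤ s := by
      have := Finset.mem_range.mp hb; omega
    have h2 : ∑ r ∈ Finset.Ico N (N + s - b), Pp.coeff b * (S r * u (r + b))
        = ∑ t ∈ Finset.range (s - b), Pp.coeff b * (S (N + t) * u (N + t + b)) := by
      rw [Finset.sum_Ico_eq_sum_range]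
      have h3 : N + s - b - N = s - b := by omega
      rw [h3]
    rw [← h2, Finset.sum_range_add_sum_Ico _ (by omega : N ≤ N + s - b)]
  -- convergence of the error term
  obtain ⟨C0, hC0pos, hC0⟩ := CoQfAux.S_bound hs hζ hinj
  have hgh0 : Tendsto gh atTop (𝓝 0) := by
    have h2 := hg2.tendsto_atTop_zero
    have h3 : Tendsto (fun n => Real.sqrt (‖gh n‖ ^ 2)) atTop (𝓝 (Real.sqrt 0)) :=
      (Real.continuous_sqrt.tendsto 0).comp h2
    have h4 : Tendsto (fun n => ‖gh n‖) atTop (𝓝 0) := by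
      simpa [Real.sqrt_sq (norm_nonneg _)] using h3
    exact tendsto_zero_iff_norm_tendsto_zero.mpr h4
  have hterm : ∀ b t : ℕ,
      Tendsto (fun N => Pp.coeff b * (S (N + t) * u (N + t + b))) atTop (𝓝 0) := by
    intro b t
    have hmap : Tendsto (fun N : ℕ => j + (N + t + b)) atTop atTop :=
      tendsto_atTop_mono (fun N => by simp only [id_eq]; omega) tendsto_id
    have hu' : Tendsto (fun N => u (N + t + b)) atTop (𝓝 0) := hgh0.comp hmap
    have hbnd : Tendsto (fun N => ‖Pp.coeff b‖ * (C0 * ‖u (N + t + b)‖)) atTop (𝓝 0) := by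
      have := ((hu'.norm).const_mul C0).const_mul ‖Pp.coeff b‖
      simpa using this
    refine squeeze_zero_norm (fun N => ?_) hbnd
    rw [norm_mul, norm_mul]
    gcongr
    · exact hC0 (N + t)
  have hE : Tendsto (fun N => ∑ b ∈ Finset.range (s + 1), ∑ t ∈ Finset.range (s - b),
      Pp.coeff b * (S (N + t) * u (N + t + b))) atTop (𝓝 0) := by
    have := tendsto_finset_sum (Finset.range (s + 1))
      (fun b _ => tendsto_finset_sum (Finset.range (s - b)) (fun t _ => hterm b t))
    simpa using this
  have final : Tendsto (fun N => gh j - ∑ b ∈ Finset.range (s + 1), ∑ t ∈ Finset.range (s - b),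
      Pp.coeff b * (S (N + t) * u (N + t + b))) atTop (𝓝 (gh j)) := by
    simpa using tendsto_const_nhds.sub hE
  refine final.congr' ?_
  filter_upwards [eventually_ge_atTop 1] with N hN
  exact (main N hN).symm

end
end

section
/- (Interpolation property of the projection.) Fix s ≥ 1 and distinct ζ₀, …, ζ_{s−1} ∈ 𝕋, let f ∈ D_μ, let n ≥ s, and let P_n f be the orthogonal projection of f onto the polynomials of degree at most n in D_μ. Then for every 0 ≤ ℓ ≤ s − 1, (P_n f)(ζ_ℓ) = f(ζ_ℓ) = ∑_{k=0}^∞ f̂(k) ζ_ℓ^k. -/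
open Complex Polynomial Filter Metric Topology
open scoped NNReal ENNReal

noncomputable section

lemma coeffs_eq_zero_of_hasSum_zero (d : ℕ → ℂ)
    (hd : ∀ z ∈ Metric.ball (0:ℂ) 1, HasSum (fun n => d n * z ^ n) 0) :
    ∀ m, d m = 0 := by
  set p := FormalMultilinearSeries.ofScalars ℂ d with hp
  have hmem : ((1:ℂ)/2) ∈ Metric.ball (0:ℂ) 1 := by
    simp [Metric.mem_ball]; norm_num
  have htend : Tendsto (fun n => ‖p n‖ * ((1/2 : ℝ≥0) : ℝ) ^ n) atTop (𝓝 0) := by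
    have h1 := (hd _ hmem).summable.tendsto_atTop_zero
    have h2 : Tendsto (fun n => ‖d n * ((1:ℂ)/2) ^ n‖) atTop (𝓝 0) := by
      simpa using h1.norm
    convert h2 using 2 with n
    rw [hp, FormalMultilinearSeries.ofScalars_norm, norm_mul, norm_pow]
    norm_num
  have hrad : ((1/2 : ℝ≥0) : ℝ≥0∞) ≤ p.radius := p.le_radius_of_tendsto htend
  have hball : HasFPowerSeriesOnBall (fun _ => (0:ℂ)) p 0 ((1/2 : ℝ≥0) : ℝ≥0∞) := by
    refine ⟨hrad, by norm_num, fun {y} hy => ?_⟩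
    have hy' : y ∈ Metric.ball (0:ℂ) 1 := by
      rw [EMetric.mem_ball, edist_zero_right] at hy
      rw [Metric.mem_ball, dist_zero_right]
      calc ‖y‖ = ((‖y‖₊ : ℝ≥0∞)).toReal := by simp
        _ < 1 := by
          have : (‖y‖₊ : ℝ≥0∞) < 1 := lt_trans hy (by norm_num)
          simpa using (ENNReal.toReal_lt_toReal (by simp) (by simp)).mpr this
    have h3 := hd y hy'
    have hco : ∀ n : ℕ, (p n fun _ => y) = d n * y ^ n := fun n => by
      rw [hp, FormalMultilinearSeries.ofScalars_apply_eq]; rw [smul_eq_mul]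
    exact (funext hco : (fun n => p n fun _ => y) = _) ▸ h3
  intro m
  have h0 := hball.hasFPowerSeriesAt.apply_eq_zero m 1
  have : (p m fun _ => 1) = d m := by
    rw [hp, FormalMultilinearSeries.ofScalars_apply_eq]; simp
  rw [this] at h0; exact h0

lemma hasSum_poly_eval (Q : Polynomial ℂ) (z : ℂ) :
    HasSum (fun n => Q.coeff n * z ^ n) (Q.eval z) := by
  have h : ∀ m ∉ Finset.range (Q.natDegree + 1), Q.coeff m * z ^ m = 0 := by
    intro m hm
    rw [Q.coeff_eq_zero_of_natDegree_lt (by simpa using Finset.mem_range.not.mp hm), zero_mul]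
  have : HasSum (fun n => Q.coeff n * z ^ n) (∑ b ∈ Finset.range (Q.natDegree + 1), Q.coeff b * z ^ b) :=
    hasSum_sum_of_ne_finset_zero h
  rwa [← Polynomial.eval_eq_sum_range] at this

lemma norm_le_sqrt_tsum {gh : ℕ → ℂ} (h : Summable fun n => ‖gh n‖ ^ 2) (n : ℕ) :
    ‖gh n‖ ≤ Real.sqrt (∑' m, ‖gh m‖ ^ 2) := by
  have h1 : ‖gh n‖ ^ 2 ≤ ∑' m, ‖gh m‖ ^ 2 := Summable.le_tsum h n (fun m _ => by positivity)
  calc ‖gh n‖ = Real.sqrt (‖gh n‖ ^ 2) := (Real.sqrt_sq (norm_nonneg _)).symm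
    _ ≤ _ := Real.sqrt_le_sqrt h1

lemma summable_norm_ghz {gh : ℕ → ℂ} (h : Summable fun n => ‖gh n‖ ^ 2) {z : ℂ}
    (hz : ‖z‖ < 1) : Summable fun n => ‖gh n * z ^ n‖ := by
  refine Summable.of_nonneg_of_le (fun n => norm_nonneg _)
    (fun n => ?_) ((summable_geometric_of_lt_one (norm_nonneg z) hz).mul_left
      (Real.sqrt (∑' m, ‖gh m‖ ^ 2)))
  rw [norm_mul, norm_pow]
  exact mul_le_mul_of_nonneg_right (norm_le_sqrt_tsum h n) (by positivity)

lemma hasSum_conv (Q : Polynomial ℂ) (gh : ℕ → ℂ) (hgh : Summable fun n => ‖gh n‖ ^ 2)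
    (z : ℂ) (hz : ‖z‖ < 1) :
    HasSum (fun k => (∑ i ∈ Finset.range (k + 1), Q.coeff i * gh (k - i)) * z ^ k)
      (Q.eval z * ∑' n, gh n * z ^ n) := by
  have hf : Summable fun n => ‖Q.coeff n * z ^ n‖ := by
    apply summable_of_ne_finset_zero (s := Finset.range (Q.natDegree + 1))
    intro m hm
    rw [Q.coeff_eq_zero_of_natDegree_lt (by simpa using Finset.mem_range.not.mp hm), zero_mul,
      norm_zero]
  have hg : Summable fun n => ‖gh n * z ^ n‖ := summable_norm_ghz hgh hz
  have hsum := (summable_norm_sum_mul_range_of_summable_norm hf hg).of_norm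
  have hts := tsum_mul_tsum_eq_tsum_sum_range_of_summable_norm hf hg
  have heq : ∀ k, (∑ i ∈ Finset.range (k + 1), Q.coeff i * z ^ i * (gh (k - i) * z ^ (k - i)))
      = (∑ i ∈ Finset.range (k + 1), Q.coeff i * gh (k - i)) * z ^ k := by
    intro k
    rw [Finset.sum_mul]
    refine Finset.sum_congr rfl fun i hi => ?_
    have hik : i ≤ k := Nat.lt_succ_iff.mp (Finset.mem_range.mp hi)
    rw [mul_assoc, mul_comm (z ^ i), mul_assoc, ← pow_add, Nat.sub_add_cancel hik, mul_assoc]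
  have hqs : ∑' n, Q.coeff n * z ^ n = Q.eval z := (hasSum_poly_eval Q z).tsum_eq
  have := hsum.hasSum
  rw [← hts, hqs] at this
  exact (funext heq : _) ▸ this

lemma partial_sum_conv (Q : Polynomial ℂ) (gh : ℕ → ℂ) (z : ℂ) (N : ℕ) :
    ∑ k ∈ Finset.range N, (∑ i ∈ Finset.range (k + 1), Q.coeff i * gh (k - i)) * z ^ k
      = ∑ i ∈ Finset.range N, Q.coeff i * z ^ i * ∑ m ∈ Finset.range (N - i), gh m * z ^ m := by
  have h1 : ∀ k, (∑ i ∈ Finset.range (k + 1), Q.coeff i * gh (k - i)) * z ^ k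
      = ∑ i ∈ Finset.range (k + 1), Q.coeff i * z ^ i * (gh (k - i) * z ^ (k - i)) := by
    intro k
    rw [Finset.sum_mul]
    refine Finset.sum_congr rfl fun i hi => ?_
    have hik : i ≤ k := Nat.lt_succ_iff.mp (Finset.mem_range.mp hi)
    rw [show z ^ k = z ^ i * z ^ (k - i) by rw [← pow_add]; congr 1; omega]
    ring
  simp_rw [h1]
  have h2 := Finset.sum_Ico_Ico_comm 0 N (fun i k => Q.coeff i * z ^ i * (gh (k - i) * z ^ (k - i)))
  simp only [← Finset.range_eq_Ico] at h2
  rw [← h2]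
  refine Finset.sum_congr rfl fun i hi => ?_
  rw [Finset.sum_Ico_eq_sum_range, Finset.mul_sum]
  refine Finset.sum_congr rfl fun m hm => ?_
  simp

set_option maxHeartbeats 1000000 in
lemma tendsto_conv_partial_zero (Q : Polynomial ℂ) (gh : ℕ → ℂ) (ζ : ℂ)
    (he : Tendsto (fun m => gh m * ζ ^ m) atTop (𝓝 0)) (hQ : Q.eval ζ = 0) :
    Tendsto (fun N => ∑ k ∈ Finset.range N,
      (∑ i ∈ Finset.range (k + 1), Q.coeff i * gh (k - i)) * ζ ^ k) atTop (𝓝 0) := by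
  set D := Q.natDegree
  set S : ℕ → ℂ := fun N => ∑ m ∈ Finset.range N, gh m * ζ ^ m with hS
  -- the partial sums eventually equal a finite combination of S-differences
  have hdiff : ∀ i : ℕ, Tendsto (fun N => S (N - i) - S N) atTop (𝓝 0) := by
    intro i
    have hterm : ∀ j : ℕ, Tendsto (fun N => gh (N - i + j) * ζ ^ (N - i + j)) atTop (𝓝 0) := by
      intro j
      exact he.comp (tendsto_atTop_atTop.mpr fun b => ⟨b + i, fun N hN => by omega⟩)
    have hsum : Tendsto (fun N => ∑ j ∈ Finset.range i, gh (N - i + j) * ζ ^ (N - i + j))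
        atTop (𝓝 0) := by
      have := tendsto_finset_sum (Finset.range i) (fun j _ => hterm j)
      simpa using this
    have heq : ∀ᶠ N in atTop, (-∑ j ∈ Finset.range i, gh (N - i + j) * ζ ^ (N - i + j))
        = S (N - i) - S N := by
      filter_upwards [eventually_ge_atTop i] with N hN
      have hIco : ∑ k ∈ Finset.Ico (N - i) N, gh k * ζ ^ k = S N - S (N - i) :=
        Finset.sum_Ico_eq_sub _ (Nat.sub_le N i)
      rw [Finset.sum_Ico_eq_sum_range, show N - (N - i) = i by omega] at hIco
      rw [hIco]; ring
    exact Tendsto.congr' heq (by simpa using hsum.neg)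
  have hQe : ∑ i ∈ Finset.range (D + 1), Q.coeff i * ζ ^ i = 0 := by
    rw [← Polynomial.eval_eq_sum_range, hQ]
  have hcomb : Tendsto (fun N => ∑ i ∈ Finset.range (D + 1),
      Q.coeff i * ζ ^ i * (S (N - i) - S N)) atTop (𝓝 0) := by
    have := tendsto_finset_sum (Finset.range (D + 1))
      (fun i _ => ((hdiff i).const_mul (Q.coeff i * ζ ^ i)))
    simpa using this
  refine Tendsto.congr' ?_ hcomb
  filter_upwards [eventually_ge_atTop (D + 1)] with N hN
  rw [partial_sum_conv]
  have hsub : ∑ i ∈ Finset.range N, Q.coeff i * ζ ^ i * S (N - i)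
      = ∑ i ∈ Finset.range (D + 1), Q.coeff i * ζ ^ i * S (N - i) := by
    symm
    refine Finset.sum_subset (Finset.range_subset_range.mpr hN) ?_
    intro i _ hi
    rw [Q.coeff_eq_zero_of_natDegree_lt (by simpa [D] using Finset.mem_range.not.mp hi)]
    ring
  calc ∑ i ∈ Finset.range (D + 1), Q.coeff i * ζ ^ i * (S (N - i) - S N)
      = (∑ i ∈ Finset.range (D + 1), Q.coeff i * ζ ^ i * S (N - i))
        - (∑ i ∈ Finset.range (D + 1), Q.coeff i * ζ ^ i) * S N := by
        rw [Finset.sum_mul, ← Finset.sum_sub_distrib]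
        exact Finset.sum_congr rfl fun i _ => by ring
    _ = ∑ i ∈ Finset.range (D + 1), Q.coeff i * ζ ^ i * S (N - i) := by rw [hQe]; ring
    _ = ∑ i ∈ Finset.range N, Q.coeff i * ζ ^ i * S (N - i) := hsub.symm
    _ = ∑ i ∈ Finset.range N, Q.coeff i * ζ ^ i * ∑ m ∈ Finset.range (N - i), gh m * ζ ^ m := rfl

/-- `RepDmu s ζ f a gh` : on `𝔻`, `f = ∑_{j<s} a_j z^j + q(z) g(z)` where
`q(z) = ∏ (z - ζ_k)` and `g ∈ H²` has Taylor coefficients `gh`. -/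
def RepDmu (s : ℕ) (ζ : Fin s → ℂ) (f : ℂ → ℂ) (a : Fin s → ℂ) (gh : ℕ → ℂ) : Prop :=
  Summable (fun n => ‖gh n‖ ^ 2) ∧
    ∀ z ∈ Metric.ball (0 : ℂ) 1,
      f z = (∑ j : Fin s, a j * z ^ (j : ℕ)) + (∏ k, (z - ζ k)) * ∑' n, gh n * z ^ n

/-- The `D_μ` inner product of the elements represented by `(b, hh)` and `(c, kk)`. -/
def DinnerDmu (s : ℕ) (ζ : Fin s → ℂ) (b : Fin s → ℂ) (hh : ℕ → ℂ)
    (c : Fin s → ℂ) (kk : ℕ → ℂ) : ℂ :=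
  (∑ k : Fin s, (∑ j : Fin s, b j * ζ k ^ (j : ℕ)) *
      (starRingEnd ℂ) (∑ j : Fin s, c j * ζ k ^ (j : ℕ))) +
    ∑' n, hh n * (starRingEnd ℂ) (kk n)

/-- **Interpolation property of the projection.** For `f ∈ D_μ`,
`n ≥ s`, and `P` the orthogonal projection of `f` onto the polynomials of degree at
most `n` (characterized by `deg P ≤ n` and `f - P` being `D_μ`-orthogonal to all
polynomials of degree `≤ n`), one has, for every `0 ≤ ℓ ≤ s-1`,
`P(ζ_ℓ) = f(ζ_ℓ) = ∑_{k=0}^∞ fh(k) ζ_ℓ^k`. -/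
theorem projection_interpolates_boundary_values
    (s : ℕ) (hs : 1 ≤ s) (ζ : Fin s → ℂ)
    (hζ : ∀ k, ‖ζ k‖ = 1) (hinj : Function.Injective ζ)
    (f : ℂ → ℂ) (a : Fin s → ℂ) (gh : ℕ → ℂ) (hrep : RepDmu s ζ f a gh)
    (fh : ℕ → ℂ)
    (hfh : ∀ z ∈ Metric.ball (0 : ℂ) 1, HasSum (fun n => fh n * z ^ n) (f z))
    (n : ℕ) (hn : s ≤ n)
    (P : Polynomial ℂ) (hdeg : P.degree ≤ (n : WithBot ℕ))
    (horth : ∀ p : Polynomial ℂ, p.degree ≤ (n : WithBot ℕ) →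
      ∀ (b : Fin s → ℂ) (hh : ℕ → ℂ) (cc : Fin s → ℂ) (kk : ℕ → ℂ),
        RepDmu s ζ (fun z => f z - P.eval z) b hh →
        RepDmu s ζ (fun z => p.eval z) cc kk →
        DinnerDmu s ζ b hh cc kk = 0) :
    ∀ ℓ : Fin s,
      P.eval (ζ ℓ) = (∑ j : Fin s, a j * ζ ℓ ^ (j : ℕ)) ∧
      Tendsto (fun N => ∑ k ∈ Finset.range N, fh k * ζ ℓ ^ k) atTop
        (𝓝 (∑ j : Fin s, a j * ζ ℓ ^ (j : ℕ))) := by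
  intro ℓ
  obtain ⟨hgh2, hfrep⟩ := hrep
  -- the polynomial q
  set Q : Polynomial ℂ := ∏ k : Fin s, (Polynomial.X - Polynomial.C (ζ k)) with hQdef
  have hQmonic : Q.Monic := monic_prod_of_monic _ _ fun k _ => monic_X_sub_C (ζ k)
  have hQdeg : Q.natDegree = s := by
    rw [hQdef, Polynomial.natDegree_prod _ _ (fun k _ => X_sub_C_ne_zero (ζ k))]
    simp
  have hQeval : ∀ z : ℂ, Q.eval z = ∏ k, (z - ζ k) := by
    intro z; rw [hQdef, Polynomial.eval_prod]; simp
  have hQzero : ∀ k : Fin s, Q.eval (ζ k) = 0 := by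
    intro k
    rw [hQeval]
    exact Finset.prod_eq_zero (Finset.mem_univ k) (sub_self _)
  -- division with remainder
  set R : Polynomial ℂ := P %ₘ Q with hRdef
  set T : Polynomial ℂ := P /ₘ Q with hTdef
  have hPQ : R + Q * T = P := Polynomial.modByMonic_add_div P Q
  have hRdeg : R.natDegree < s := by
    rcases eq_or_ne R 0 with h0 | h0
    · rw [h0]; simp; omega
    · have := Polynomial.degree_modByMonic_lt P hQmonic
      rw [← hRdef] at this
      have h2 : Q.degree = (s : WithBot ℕ) := by
        rw [Polynomial.degree_eq_natDegree hQmonic.ne_zero, hQdeg]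
      rw [h2] at this
      exact (Polynomial.natDegree_lt_iff_degree_lt h0).mpr this
  have hReval : ∀ z : ℂ, R.eval z = ∑ j : Fin s, R.coeff j * z ^ (j : ℕ) := by
    intro z
    rw [Polynomial.eval_eq_sum_range' (lt_of_lt_of_le hRdeg (le_refl s)), Finset.sum_range]
  -- the first representation : f - P
  have hmemball : ∀ z : ℂ, z ∈ Metric.ball (0:ℂ) 1 → ‖z‖ < 1 := by
    intro z hz; rwa [Metric.mem_ball, dist_zero_right] at hz
  have hrep1 : RepDmu s ζ (fun z => f z - P.eval z)
      (fun j => a j - R.coeff j) (fun m => gh m - T.coeff m) := by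
    constructor
    · set K := T.natDegree + 1 with hK
      have h1 : Summable (fun m => ‖gh (m + K)‖ ^ 2) := (summable_nat_add_iff (f := fun n => ‖gh n‖ ^ 2) K).mpr hgh2
      have h2 : (fun m => ‖gh (m + K) - T.coeff (m + K)‖ ^ 2)
          = fun m => ‖gh (m + K)‖ ^ 2 := by
        funext m
        rw [T.coeff_eq_zero_of_natDegree_lt (by omega), sub_zero]
      exact (summable_nat_add_iff (f := fun m => ‖gh m - T.coeff m‖ ^ 2) K).mp (h2 ▸ h1)
    · intro z hz
      have hz1 : ‖z‖ < 1 := hmemball z hz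
      have hG : HasSum (fun m => gh m * z ^ m) (∑' m, gh m * z ^ m) :=
        ((summable_norm_ghz hgh2 hz1).of_norm).hasSum
      have hT : HasSum (fun m => T.coeff m * z ^ m) (T.eval z) := hasSum_poly_eval T z
      have hsub : HasSum (fun m => (gh m - T.coeff m) * z ^ m)
          ((∑' m, gh m * z ^ m) - T.eval z) := by
        have := hG.sub hT
        refine HasSum.congr_fun this ?_
        intro m; ring
      rw [hsub.tsum_eq]
      show f z - P.eval z = _
      rw [hfrep z hz, ← hQeval z]
      have hPz : P.eval z = R.eval z + Q.eval z * T.eval z := by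
        conv_lhs => rw [← hPQ]
        simp
      rw [hPz, hReval z]
      simp only [sub_mul, Finset.sum_sub_distrib]
      ring
  -- Lagrange basis polynomial
  have hinjOn : Set.InjOn ζ ((Finset.univ : Finset (Fin s)) : Set (Fin s)) :=
    fun x _ y _ h => hinj h
  set L : Polynomial ℂ := Lagrange.basis Finset.univ ζ ℓ with hLdef
  have hLnat : L.natDegree = s - 1 := by
    rw [hLdef, Lagrange.natDegree_basis hinjOn (Finset.mem_univ ℓ)]
    simp
  have hLnatlt : L.natDegree < s := by omega
  have hLself : L.eval (ζ ℓ) = 1 := Lagrange.eval_basis_self hinjOn (Finset.mem_univ ℓ)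
  have hLne : ∀ k : Fin s, k ≠ ℓ → L.eval (ζ k) = 0 := fun k hk =>
    Lagrange.eval_basis_of_ne (Ne.symm hk) (Finset.mem_univ k)
  have hLdegle : L.degree ≤ (n : WithBot ℕ) :=
    le_trans Polynomial.degree_le_natDegree (by exact_mod_cast le_trans hLnatlt.le hn)
  have hLeval : ∀ z : ℂ, L.eval z = ∑ j : Fin s, L.coeff j * z ^ (j : ℕ) := by
    intro z
    rw [Polynomial.eval_eq_sum_range' hLnatlt, Finset.sum_range]
  have hrepL : RepDmu s ζ (fun z => L.eval z) (fun j => L.coeff j) (fun _ => 0) := by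
    refine ⟨by simp [summable_zero], fun z hz => ?_⟩
    show L.eval z = _
    rw [hLeval z]
    simp
  have h0 := horth L hLdegle _ _ _ _ hrep1 hrepL
  rw [DinnerDmu] at h0
  have htsum0 : (∑' m, (gh m - T.coeff m) * (starRingEnd ℂ) (0 : ℂ)) = 0 := by
    simp
  rw [htsum0, add_zero] at h0
  have hW : ∀ k : Fin s, (∑ j : Fin s, L.coeff j * ζ k ^ (j : ℕ)) = if k = ℓ then 1 else 0 := by
    intro k
    rw [← hLeval (ζ k)]
    split
    · next h => rw [h]; exact hLself
    · next h => exact hLne k h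
  have hVl : (∑ j : Fin s, (a j - R.coeff j) * ζ ℓ ^ (j : ℕ)) = 0 := by
    rw [← h0]
    symm
    rw [Finset.sum_eq_single ℓ]
    · rw [hW ℓ, if_pos rfl, map_one, mul_one]
    · intro k _ hk
      rw [hW k, if_neg hk, map_zero, mul_zero]
    · intro h; exact absurd (Finset.mem_univ ℓ) h
  have hPl : P.eval (ζ ℓ) = ∑ j : Fin s, a j * ζ ℓ ^ (j : ℕ) := by
    have hPz : P.eval (ζ ℓ) = R.eval (ζ ℓ) + Q.eval (ζ ℓ) * T.eval (ζ ℓ) := by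
      conv_lhs => rw [← hPQ]
      simp
    rw [hPz, hQzero ℓ, zero_mul, add_zero, hReval (ζ ℓ)]
    have := hVl
    simp only [sub_mul, Finset.sum_sub_distrib, sub_eq_zero] at this
    exact this.symm
  refine ⟨hPl, ?_⟩
  -- Part 2 : the Taylor coefficients
  set α : ℕ → ℂ := fun k => if h : k < s then a ⟨k, h⟩ else 0 with hα
  have hA : ∀ z : ℂ, HasSum (fun k => α k * z ^ k) (∑ j : Fin s, a j * z ^ (j : ℕ)) := by
    intro z
    have hz0 : ∀ m ∉ Finset.range s, α m * z ^ m = 0 := by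
      intro m hm
      rw [hα]
      simp only
      rw [dif_neg (by simpa using hm), zero_mul]
    have : HasSum (fun k => α k * z ^ k) (∑ k ∈ Finset.range s, α k * z ^ k) :=
      hasSum_sum_of_ne_finset_zero hz0
    have heq : ∑ k ∈ Finset.range s, α k * z ^ k = ∑ j : Fin s, a j * z ^ (j : ℕ) := by
      rw [Finset.sum_range]
      exact Finset.sum_congr rfl fun j _ => by simp [hα, j.isLt]
    rwa [heq] at this
  have hc : ∀ z ∈ Metric.ball (0:ℂ) 1, HasSum
      (fun k => (α k + ∑ i ∈ Finset.range (k + 1), Q.coeff i * gh (k - i)) * z ^ k) (f z) := by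
    intro z hz
    have hz1 : ‖z‖ < 1 := hmemball z hz
    have h1 := (hA z).add (hasSum_conv Q gh hgh2 z hz1)
    rw [hfrep z hz, ← hQeval z]
    refine HasSum.congr_fun h1 ?_
    intro k; ring
  have hfc : ∀ k, fh k = α k + ∑ i ∈ Finset.range (k + 1), Q.coeff i * gh (k - i) := by
    have hz0 : ∀ z ∈ Metric.ball (0:ℂ) 1, HasSum (fun k =>
        (fh k - (α k + ∑ i ∈ Finset.range (k + 1), Q.coeff i * gh (k - i))) * z ^ k) 0 := by
      intro z hz
      have := (hfh z hz).sub (hc z hz)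
      rw [sub_self] at this
      refine HasSum.congr_fun this ?_
      intro k; ring
    intro k
    have := coeffs_eq_zero_of_hasSum_zero _ hz0 k
    linear_combination this
  -- convergence of the partial sums
  have he : Tendsto (fun m => gh m * ζ ℓ ^ m) atTop (𝓝 0) := by
    rw [tendsto_zero_iff_norm_tendsto_zero]
    have h2 := hgh2.tendsto_atTop_zero
    have h3 : Tendsto (fun m => Real.sqrt (‖gh m‖ ^ 2)) atTop (𝓝 (Real.sqrt 0)) :=
      (Real.continuous_sqrt.tendsto 0).comp h2
    have h4 : Tendsto (fun m => ‖gh m‖) atTop (𝓝 0) := by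
      simpa [Real.sqrt_sq (norm_nonneg _)] using h3
    refine h4.congr ?_
    intro m
    rw [norm_mul, norm_pow, show ‖ζ ℓ‖ = 1 from by rw [hζ ℓ], one_pow,
      mul_one]
  have hY := tendsto_conv_partial_zero Q gh (ζ ℓ) he (hQzero ℓ)
  have hX : Tendsto (fun N => ∑ k ∈ Finset.range N, α k * ζ ℓ ^ k) atTop
      (𝓝 (∑ j : Fin s, a j * ζ ℓ ^ (j : ℕ))) := by
    refine Tendsto.congr' ?_ tendsto_const_nhds
    filter_upwards [eventually_ge_atTop s] with N hN
    have hsub : ∑ k ∈ Finset.range s, α k * ζ ℓ ^ k = ∑ k ∈ Finset.range N, α k * ζ ℓ ^ k := by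
      refine Finset.sum_subset (Finset.range_subset_range.mpr hN) ?_
      intro m _ hm
      rw [hα]
      simp only
      rw [dif_neg (by simpa using hm), zero_mul]
    rw [← hsub, Finset.sum_range]
    exact (Finset.sum_congr rfl fun j _ => by simp [hα, j.isLt]).symm
  have := hX.add hY
  rw [add_zero] at this
  refine this.congr ?_
  intro N
  rw [← Finset.sum_add_distrib]
  refine Finset.sum_congr rfl fun k _ => ?_
  rw [hfc k]; ring


end
end

section
/- Fix s ≥ 1 and distinct ζ₀, …, ζ_{s−1} ∈ 𝕋, let g ∈ H², a₀, …, a_{s−1} ∈ ℂ, set q(z) = ∏_k(z − ζ_k) and f(z) = ∑_{j<s} a_j z^j + q(z)g(z) on 𝔻. Then for every 0 ≤ k ≤ s−1 the Taylor series of f converges at ζ_k, and ∑_{j=0}^∞ f̂(j) ζ_k^j = ∑_{j<s} a_j ζ_k^j, which is the radial limit lim_{r→1⁻} f(rζ_k). -/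
open Complex Filter Metric Topology
lemma aux_hasFPowerSeries (F : ℂ → ℂ) (c : ℕ → ℂ)
    (hc : ∀ z ∈ Metric.ball (0 : ℂ) 1, HasSum (fun n => c n * z ^ n) (F z)) :
    HasFPowerSeriesOnBall F (FormalMultilinearSeries.ofScalars ℂ c) 0 1 := by
  constructor
  · refine ENNReal.le_of_forall_nnreal_lt fun r hr => ?_
    have hz : ((r : ℝ) : ℂ) ∈ Metric.ball (0 : ℂ) 1 := by
      simp only [Metric.mem_ball, dist_zero_right, Complex.norm_real,
        Real.norm_eq_abs, NNReal.abs_eq r]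
      exact_mod_cast hr
    have hsum := (hc _ hz).summable
    have htend : Tendsto (fun n => ‖c n * ((r : ℝ) : ℂ) ^ n‖) atTop (𝓝 0) := by
      simpa using hsum.tendsto_atTop_zero.norm
    obtain ⟨C, hC⟩ := htend.bddAbove_range
    refine FormalMultilinearSeries.le_radius_of_bound _ C fun n => ?_
    have h1 : ‖FormalMultilinearSeries.ofScalars ℂ c n‖ = ‖c n‖ :=
      FormalMultilinearSeries.ofScalars_norm ..
    have h2 : ‖c n * ((r : ℝ) : ℂ) ^ n‖ ≤ C := hC ⟨n, rfl⟩
    calc ‖FormalMultilinearSeries.ofScalars ℂ c n‖ * (r : ℝ) ^ n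
        = ‖c n * ((r : ℝ) : ℂ) ^ n‖ := by
          rw [h1, norm_mul, norm_pow, Complex.norm_real, Real.norm_eq_abs,
            NNReal.abs_eq r]
      _ ≤ C := h2
  · exact one_pos
  · intro y hy
    have hy' : y ∈ Metric.ball (0 : ℂ) 1 := by
      simp only [Metric.mem_ball, dist_zero_right]
      have h : ‖y‖ₑ < 1 := by simpa using hy
      rwa [← ofReal_norm, ENNReal.ofReal_lt_one] at h
    have := hc y hy'
    simp only [zero_add]
    convert this using 2 with n
    · rfl
    rw [FormalMultilinearSeries.ofScalars_apply_eq, smul_eq_mul]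

lemma aux_coeff_unique {F : ℂ → ℂ} {c d : ℕ → ℂ}
    (hc : ∀ z ∈ Metric.ball (0 : ℂ) 1, HasSum (fun n => c n * z ^ n) (F z))
    (hd : ∀ z ∈ Metric.ball (0 : ℂ) 1, HasSum (fun n => d n * z ^ n) (F z)) :
    c = d := by
  have h1 := (aux_hasFPowerSeries F c hc).hasFPowerSeriesAt
  have h2 := (aux_hasFPowerSeries F d hd).hasFPowerSeriesAt
  exact FormalMultilinearSeries.ofScalars_series_injective (𝕜 := ℂ) ℂ
    (h1.eq_formalMultilinearSeries h2)


/-- For `s ≥ 1`, distinct `ζ₀, …, ζ_{s-1} ∈ 𝕋`, `g ∈ H²`,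
`q(z) = ∏ (z - ζ_k)` and `f(z) = ∑_{j<s} a_j z^j + q(z) g(z)` on `𝔻`:  for every
`0 ≤ k ≤ s-1` the Taylor series of `f` converges at `ζ_k` with sum
`∑_{j<s} a_j ζ_k^j`, which is also the radial limit of `f` at `ζ_k`. -/
theorem boundary_values_of_Dmu_functions
    (s : ℕ) (hs : 1 ≤ s) (ζ : Fin s → ℂ)
    (hζ : ∀ k, ‖ζ k‖ = 1) (hinj : Function.Injective ζ)
    (g : ℂ → ℂ) (gh : ℕ → ℂ)
    (hg : ∀ z ∈ Metric.ball (0 : ℂ) 1, HasSum (fun n => gh n * z ^ n) (g z))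
    (hg2 : Summable (fun n => ‖gh n‖ ^ 2))
    (a : Fin s → ℂ) (f : ℂ → ℂ)
    (hf : ∀ z ∈ Metric.ball (0 : ℂ) 1,
      f z = (∑ j : Fin s, a j * z ^ (j : ℕ)) + (∏ k, (z - ζ k)) * g z)
    (fh : ℕ → ℂ)
    (hfh : ∀ z ∈ Metric.ball (0 : ℂ) 1, HasSum (fun n => fh n * z ^ n) (f z)) :
    ∀ k : Fin s,
      Tendsto (fun N => ∑ j ∈ Finset.range N, fh j * ζ k ^ j) atTop
        (𝓝 (∑ j : Fin s, a j * ζ k ^ (j : ℕ))) ∧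
      Tendsto (fun r : ℝ => f ((r : ℂ) * ζ k)) (𝓝[<] (1 : ℝ))
        (𝓝 (∑ j : Fin s, a j * ζ k ^ (j : ℕ))) := by
  -- gh tends to zero
  have hgh0 : Tendsto gh atTop (𝓝 0) := by
    rw [tendsto_zero_iff_norm_tendsto_zero]
    have h1 := hg2.tendsto_atTop_zero
    have h2 : Tendsto (fun n => Real.sqrt (‖gh n‖ ^ 2)) atTop (𝓝 (Real.sqrt 0)) :=
      (Real.continuous_sqrt.tendsto 0).comp h1
    simpa [Real.sqrt_sq (norm_nonneg _)] using h2
  -- gh is bounded in norm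
  obtain ⟨C, hC⟩ := hgh0.norm.bddAbove_range
  have hCle : ∀ n, ‖gh n‖ ≤ C := fun n => hC ⟨n, rfl⟩
  intro k
  set ζk := ζ k with hζk
  have hζknorm : ‖ζk‖ = 1 := hζ k
  set R : Polynomial ℂ := ∏ j ∈ Finset.univ.erase k, (Polynomial.X - Polynomial.C (ζ j))
    with hR
  have hfact : ∀ z : ℂ, (∏ j, (z - ζ j)) = (z - ζk) * R.eval z := by
    intro z
    rw [← Finset.mul_prod_erase _ _ (Finset.mem_univ k), hR]
    simp [Polynomial.eval_prod, hζk]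
  set d := R.natDegree with hd
  set hh : ℕ → ℂ := fun n => ∑ i ∈ Finset.range (n + 1), R.coeff i * gh (n - i) with hhh
  -- Cauchy product
  have hhsum : ∀ z ∈ Metric.ball (0 : ℂ) 1,
      HasSum (fun n => hh n * z ^ n) (R.eval z * g z) := by
    intro z hz
    have hznorm : ‖z‖ < 1 := by simpa using hz
    have hRsumm : Summable (fun i => ‖R.coeff i * z ^ i‖) := by
      apply summable_of_ne_finset_zero (s := Finset.range (d + 1))
      intro i hi
      rw [Polynomial.coeff_eq_zero_of_natDegree_lt, zero_mul, norm_zero]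
      simpa [Nat.lt_succ_iff] using hi
    have hGsumm : Summable (fun n => ‖gh n * z ^ n‖) := by
      apply Summable.of_nonneg_of_le (fun n => norm_nonneg _)
        (fun n => ?_) ((summable_geometric_of_lt_one (norm_nonneg z) hznorm).mul_left C)
      rw [norm_mul, norm_pow]
      exact mul_le_mul_of_nonneg_right (hCle n) (by positivity)
    have key := (summable_norm_sum_mul_range_of_summable_norm hRsumm hGsumm).of_norm
    have hval := tsum_mul_tsum_eq_tsum_sum_range_of_summable_norm hRsumm hGsumm
    have hRval : ∑' i, R.coeff i * z ^ i = R.eval z := by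
      rw [tsum_eq_sum (s := Finset.range (d + 1)) ?_]
      · rw [Polynomial.eval_eq_sum_range]
      · intro i hi
        rw [Polynomial.coeff_eq_zero_of_natDegree_lt, zero_mul]
        simpa [Nat.lt_succ_iff] using hi
    have hGval : ∑' n, gh n * z ^ n = g z := (hg z hz).tsum_eq
    rw [hRval, hGval] at hval
    have := key.hasSum
    rw [← hval] at this
    convert this using 2 with n
    · rfl
    rw [hhh]
    rw [Finset.sum_mul]
    refine Finset.sum_congr rfl fun i hi => ?_
    rw [Finset.mem_range, Nat.lt_succ_iff] at hi
    rw [mul_mul_mul_comm, ← pow_add, Nat.add_sub_cancel' hi]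
  set pc : ℕ → ℂ := fun n => if h : n < s then a ⟨n, h⟩ else 0 with hpc
  set bh : ℕ → ℂ := fun n =>
    pc n + ((if n = 0 then 0 else hh (n - 1)) - ζk * hh n) with hbh
  have hbsum : ∀ z ∈ Metric.ball (0 : ℂ) 1,
      HasSum (fun n => bh n * z ^ n) (f z) := by
    intro z hz
    have hp : HasSum (fun n => pc n * z ^ n) (∑ j : Fin s, a j * z ^ (j : ℕ)) := by
      have : HasSum (fun n => pc n * z ^ n)
          (∑ n ∈ Finset.range s, pc n * z ^ n) := by
        apply hasSum_sum_of_ne_finset_zero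
        intro n hn
        rw [Finset.mem_range] at hn
        rw [hpc]
        simp only [dif_neg hn, zero_mul]
      convert this using 1
      rw [Finset.sum_range fun n => pc n * z ^ n]
      refine (Finset.sum_congr rfl fun i _ => ?_)
      simp [hpc]
    have hT := hhsum z hz
    have hshift : HasSum (fun n => (if n = 0 then 0 else hh (n - 1)) * z ^ n)
        (z * (R.eval z * g z)) := by
      have h1 : HasSum (fun n =>
          (fun m => (if m = 0 then 0 else hh (m - 1)) * z ^ m) (n + 1))
          (z * (R.eval z * g z)) := by
        have := hT.mul_left z
        convert this using 2 with n
        · rfl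
        simp only [Nat.add_sub_cancel, Nat.succ_ne_zero, if_false]
        ring
      have := (hasSum_nat_add_iff (f := fun m => (if m = 0 then 0 else hh (m - 1)) * z ^ m) 1).mp h1
      simpa using this
    have hζT := hT.mul_left ζk
    have hcomb := hp.add (hshift.sub hζT)
    have hval : f z = (∑ j : Fin s, a j * z ^ (j : ℕ))
        + (z * (R.eval z * g z) - ζk * (R.eval z * g z)) := by
      rw [hf z hz, hfact z]
      ring
    rw [← hval] at hcomb
    convert hcomb using 2 with n
    rw [hbh]
    ring
  have hfb : fh = bh := aux_coeff_unique hfh hbsum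
  set P := ∑ j : Fin s, a j * ζk ^ (j : ℕ) with hP
  -- partial sum formula
  have hSform : ∀ N, ∑ j ∈ Finset.range N, bh j * ζk ^ j =
      (∑ n ∈ Finset.range N, pc n * ζk ^ n)
        - (if N = 0 then 0 else hh (N - 1) * ζk ^ N) := by
    intro N
    induction N with
    | zero => simp
    | succ N ih =>
      rw [Finset.sum_range_succ, Finset.sum_range_succ, ih]
      cases N with
      | zero => simp [hbh]; ring
      | succ M =>
        simp only [Nat.succ_ne_zero, if_false, Nat.add_sub_cancel, hbh]
        ring
  -- the polynomial partial sums stabilize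
  have hpoly : ∀ N, s ≤ N → (∑ n ∈ Finset.range N, pc n * ζk ^ n) = P := by
    intro N hN
    rw [← Finset.sum_subset (Finset.range_subset_range.2 hN) ?_]
    · rw [Finset.sum_range fun n => pc n * ζk ^ n, hP]
      exact Finset.sum_congr rfl fun i _ => by simp [hpc]
    · intro n _ hn
      rw [Finset.mem_range, not_lt] at hn
      rw [hpc]
      simp [dif_neg (not_lt.2 hn), zero_mul]
  -- hh tends to zero
  have hhh0 : Tendsto hh atTop (𝓝 0) := by
    have heq : ∀ᶠ n in atTop, (fun n => ∑ i ∈ Finset.range (d + 1),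
        R.coeff i * gh (n - i)) n = hh n := by
      filter_upwards [eventually_ge_atTop d] with n hn
      rw [hhh]
      apply Finset.sum_subset (by simpa [Nat.succ_le_succ_iff] using hn)
      intro i _ hi
      rw [Polynomial.coeff_eq_zero_of_natDegree_lt, zero_mul]
      simpa [Nat.lt_succ_iff] using hi
    apply Tendsto.congr' heq
    have : Tendsto (fun n => ∑ i ∈ Finset.range (d + 1), R.coeff i * gh (n - i))
        atTop (𝓝 (∑ i ∈ Finset.range (d + 1), (0 : ℂ))) := by
      apply tendsto_finset_sum
      intro i _
      have := (hgh0.comp (tendsto_sub_atTop_nat i)).const_mul (R.coeff i)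
      simpa using this
    simpa using this
  -- the tail term goes to zero
  have htail : Tendsto (fun N => hh (N - 1) * ζk ^ N) atTop (𝓝 0) := by
    have hb : ∀ N, ‖hh (N - 1) * ζk ^ N‖ ≤ ‖hh (N - 1)‖ := by
      intro N
      rw [norm_mul, norm_pow, show ‖ζk‖ = 1 from hζknorm]
      simp
    have ht : Tendsto (fun N => ‖hh (N - 1)‖) atTop (𝓝 0) :=
      tendsto_zero_iff_norm_tendsto_zero.mp (hhh0.comp (tendsto_sub_atTop_nat 1))
    exact squeeze_zero_norm hb ht
  constructor
  · -- Part 1: convergence of partial sums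
    have heq : ∀ᶠ N in atTop,
        P - hh (N - 1) * ζk ^ N = ∑ j ∈ Finset.range N, fh j * ζk ^ j := by
      filter_upwards [eventually_ge_atTop s] with N hN
      rw [hfb, hSform N, hpoly N hN, if_neg (by omega)]
    apply Tendsto.congr' heq
    have := (tendsto_const_nhds (x := P) (f := atTop (α := ℕ))).sub htail
    simpa using this
  · -- Part 2: radial limit via Abel's theorem
    have hpart1 : Tendsto (fun N => ∑ j ∈ Finset.range N, fh j * ζk ^ j) atTop (𝓝 P) := by
      have heq : ∀ᶠ N in atTop,
          P - hh (N - 1) * ζk ^ N = ∑ j ∈ Finset.range N, fh j * ζk ^ j := by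
        filter_upwards [eventually_ge_atTop s] with N hN
        rw [hfb, hSform N, hpoly N hN, if_neg (by omega)]
      apply Tendsto.congr' heq
      have := (tendsto_const_nhds (x := P) (f := atTop (α := ℕ))).sub htail
      simpa using this
    have habel := Complex.tendsto_tsum_powerSeries_nhdsWithin_lt
      (f := fun n => fh n * ζk ^ n) hpart1
    rw [tendsto_map'_iff] at habel
    apply Tendsto.congr' ?_ habel
    filter_upwards [Ioo_mem_nhdsLT_of_mem (show (1 : ℝ) ∈ Set.Ioc 0 1 by norm_num)]
      with r hr
    have hmem : ((r : ℂ) * ζk) ∈ Metric.ball (0 : ℂ) 1 := by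
      simp only [Metric.mem_ball, dist_zero_right, norm_mul, Complex.norm_real,
        Real.norm_eq_abs, hζknorm, mul_one]
      rw [_root_.abs_of_nonneg hr.1.le]
      exact hr.2
    have hts := (hfh _ hmem).tsum_eq
    simp only [Function.comp_apply]
    rw [← hts]
    exact tsum_congr fun n => by ring
end
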